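/- arXiv:1309.7268 — 3 statements merged into one kernel-verified Lean document; each statement's English description precedes it below -/
import Mathlib

section
/- Fix a real η > 1 and an integer d ≥ 2. Let (X_{j,i})_{0 ≤ j ≤ d−2, j ≤ i ≤ d−2} be independent random variables with X_{j,i} having the Beta(η + i/2, 1/2) distribution, and let Y_1,…,Y_{d−1} be independent random variables with Y_j having the Beta(η + (j−1)/2, (d−j)/2) distribution. Then the double product ∏_{j=0}^{d−2} ∏_{i=j}^{d−2} X_{j,i} has the same distribution as the single product ∏_{j=1}^{d−1} Y_j. -/
open MeasureTheory ProbabilityTheory Real Filter Finset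

noncomputable def betaMeasure (a b : ℝ) : Measure ℝ :=
  volume.withDensity fun x =>
    ENNReal.ofReal (if x ∈ Set.Ioo (0 : ℝ) 1 then
      x ^ (a - 1) * (1 - x) ^ (b - 1) / (Real.Gamma a * Real.Gamma b / Real.Gamma (a + b))
    else 0)

def HasBetaDist {Ω : Type*} [MeasurableSpace Ω] (P : Measure Ω) (X : Ω → ℝ) (a b : ℝ) : Prop :=
  Measurable X ∧ Measure.map X P = _root_.betaMeasure a b

/-- the beta density as a real function -/
noncomputable def betaD (a b : ℝ) (x : ℝ) : ℝ :=
  if x ∈ Set.Ioo (0 : ℝ) 1 then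
    x ^ (a - 1) * (1 - x) ^ (b - 1) / (Real.Gamma a * Real.Gamma b / Real.Gamma (a + b))
  else 0

lemma betaMeasure_eq (a b : ℝ) :
    _root_.betaMeasure a b = volume.withDensity fun x => ENNReal.ofReal (betaD a b x) := rfl

lemma betaD_nonneg {a b : ℝ} (ha : 0 < a) (hb : 0 < b) (x : ℝ) : 0 ≤ betaD a b x := by
  unfold betaD
  split_ifs with h
  · have hB : 0 < Real.Gamma a * Real.Gamma b / Real.Gamma (a + b) := by
      have := Real.Gamma_pos_of_pos ha
      have := Real.Gamma_pos_of_pos hb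
      have := Real.Gamma_pos_of_pos (by linarith : 0 < a + b)
      positivity
    exact div_nonneg (mul_nonneg (Real.rpow_nonneg h.1.le _)
      (Real.rpow_nonneg (by linarith [h.2] : (0:ℝ) ≤ 1 - x) _)) hB.le
  · exact le_refl 0

lemma betaD_measurable (a b : ℝ) : Measurable (betaD a b) := by
  unfold betaD
  exact Measurable.ite measurableSet_Ioo
    (((measurable_id.pow_const _).mul ((measurable_const.sub measurable_id).pow_const _)).div
      measurable_const) measurable_const

lemma beta_lintegral {b c : ℝ} (hb : 0 < b) (hc : 0 < c) :
    ∫⁻ x in Set.Ioo (0:ℝ) 1, ENNReal.ofReal (x ^ (b-1) * (1-x) ^ (c-1))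
      = ENNReal.ofReal (Real.Gamma b * Real.Gamma c / Real.Gamma (b+c)) := by
  have hb' : 0 < (b:ℂ).re := by simpa using hb
  have hc' : 0 < (c:ℂ).re := by simpa using hc
  have key : ∀ x ∈ Set.Ioo (0:ℝ) 1,
      (x:ℂ) ^ ((b:ℂ)-1) * (1-(x:ℂ)) ^ ((c:ℂ)-1)
        = ((x ^ (b-1) * (1-x) ^ (c-1) : ℝ) : ℂ) := by
    intro x hx
    have h1 : ((x ^ (b-1) : ℝ) : ℂ) = (x:ℂ) ^ ((b:ℂ)-1) := by
      rw [Complex.ofReal_cpow hx.1.le]; push_cast; ring_nf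
    have h2 : (((1-x) ^ (c-1) : ℝ) : ℂ) = (1-(x:ℂ)) ^ ((c:ℂ)-1) := by
      rw [Complex.ofReal_cpow (by linarith [hx.2])]; push_cast; ring_nf
    rw [Complex.ofReal_mul, h1, h2]
  have hci : IntervalIntegrable (fun x : ℝ => (x:ℂ)^((b:ℂ)-1) * (1-(x:ℂ))^((c:ℂ)-1)) volume 0 1 :=
    Complex.betaIntegral_convergent hb' hc'
  have hIoo : IntegrableOn (fun x : ℝ => (x:ℂ)^((b:ℂ)-1) * (1-(x:ℂ))^((c:ℂ)-1))
      (Set.Ioo 0 1) volume := by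
    rw [intervalIntegrable_iff_integrableOn_Ioc_of_le zero_le_one] at hci
    exact hci.mono_set Set.Ioo_subset_Ioc_self
  have hreal : IntegrableOn (fun x : ℝ => x ^ (b-1) * (1-x) ^ (c-1)) (Set.Ioo 0 1) volume := by
    refine IntegrableOn.congr_fun hIoo.norm ?_ measurableSet_Ioo
    intro x hx
    simp only [key x hx, Complex.norm_real, Real.norm_eq_abs]
    rw [abs_of_nonneg (mul_nonneg (Real.rpow_nonneg hx.1.le _)
      (Real.rpow_nonneg (by linarith [hx.2]) _))]
  have hval : ∫ x in Set.Ioo (0:ℝ) 1, (x ^ (b-1) * (1-x) ^ (c-1))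
      = Real.Gamma b * Real.Gamma c / Real.Gamma (b+c) := by
    have h1 : (∫ x in Set.Ioo (0:ℝ) 1, ((x ^ (b-1) * (1-x) ^ (c-1) : ℝ) : ℂ))
        = ∫ x in Set.Ioo (0:ℝ) 1, ((x:ℂ)^((b:ℂ)-1) * (1-(x:ℂ))^((c:ℂ)-1)) :=
      setIntegral_congr_fun measurableSet_Ioo (fun x hx => (key x hx).symm)
    have h2 : (∫ x in Set.Ioo (0:ℝ) 1, ((x:ℂ)^((b:ℂ)-1) * (1-(x:ℂ))^((c:ℂ)-1)))
        = Complex.betaIntegral b c := by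
      rw [Complex.betaIntegral, intervalIntegral.integral_of_le zero_le_one,
        integral_Ioc_eq_integral_Ioo]
    have h4 := Complex.Gamma_mul_Gamma_eq_betaIntegral hb' hc'
    rw [Complex.Gamma_ofReal, Complex.Gamma_ofReal, ← Complex.ofReal_add,
      Complex.Gamma_ofReal] at h4
    have h5 : (Real.Gamma (b+c) : ℂ) ≠ 0 := by
      exact_mod_cast (Real.Gamma_pos_of_pos (by linarith : (0:ℝ) < b + c)).ne'
    have h3 : Complex.betaIntegral b c
        = ((Real.Gamma b * Real.Gamma c / Real.Gamma (b+c) : ℝ) : ℂ) := by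
      push_cast
      rw [eq_div_iff h5]
      linear_combination -h4
    have := h1.trans (h2.trans h3)
    have h7 : (∫ x in Set.Ioo (0:ℝ) 1, ((x ^ (b-1) * (1-x) ^ (c-1) : ℝ) : ℂ))
        = ((∫ x in Set.Ioo (0:ℝ) 1, x ^ (b-1) * (1-x) ^ (c-1) : ℝ) : ℂ) :=
      Complex.ofRealCLM.integral_comp_comm hreal
    exact_mod_cast h7.symm.trans this
  rw [← hval, ← ofReal_integral_eq_lintegral_ofReal hreal]
  exact (ae_restrict_iff' measurableSet_Ioo).mpr (Eventually.of_forall fun x hx =>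
    mul_nonneg (Real.rpow_nonneg hx.1.le _) (Real.rpow_nonneg (by linarith [hx.2]) _))


lemma isProbabilityMeasure_beta {a b : ℝ} (ha : 0 < a) (hb : 0 < b) :
    IsProbabilityMeasure (_root_.betaMeasure a b) := by
  constructor
  rw [betaMeasure_eq, withDensity_apply _ MeasurableSet.univ, Measure.restrict_univ]
  have hB : 0 < Real.Gamma a * Real.Gamma b / Real.Gamma (a + b) := by
    have := Real.Gamma_pos_of_pos ha
    have := Real.Gamma_pos_of_pos hb
    have := Real.Gamma_pos_of_pos (by linarith : 0 < a + b)
    positivity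
  have h1 : ∀ x : ℝ, ENNReal.ofReal (betaD a b x)
      = Set.indicator (Set.Ioo (0:ℝ) 1)
          (fun x => ENNReal.ofReal (x ^ (a-1) * (1-x) ^ (b-1)) * ENNReal.ofReal ((Real.Gamma a * Real.Gamma b / Real.Gamma (a + b))⁻¹)) x := by
    intro x
    unfold betaD
    by_cases h : x ∈ Set.Ioo (0:ℝ) 1
    · rw [Set.indicator_of_mem h, if_pos h, div_eq_mul_inv,
        ENNReal.ofReal_mul (mul_nonneg (Real.rpow_nonneg h.1.le _)
          (Real.rpow_nonneg (by linarith [h.2] : (0:ℝ) ≤ 1 - x) _))]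
    · rw [Set.indicator_of_notMem h, if_neg h, ENNReal.ofReal_zero]
  simp_rw [h1]
  rw [lintegral_indicator measurableSet_Ioo, lintegral_mul_const' _ _ (by simp),
    beta_lintegral ha hb, ← ENNReal.ofReal_mul hB.le, mul_inv_cancel₀ hB.ne', ENNReal.ofReal_one]

-- algebra for the Möbius substitution
lemma key_algebra {b c t v : ℝ} (ht0 : 0 < t) (ht1 : t < 1) (hv0 : 0 < v) (hv1 : v < 1) :
    (t*(1-t)/(t+(1-t)*v)^2) *
      (((1-t)*v/(t+(1-t)*v))^(b-1) * ((t*((1-t)*(1-v)))/(t+(1-t)*v))^(c-1)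
        * ((t/(t+(1-t)*v)))^(-(b+c)))
    = t^(-b) * (1-t)^(b+c-1) * (v^(b-1)*(1-v)^(c-1)) := by
  have h1t : 0 < 1 - t := by linarith
  have h1v : 0 < 1 - v := by linarith
  have hD : 0 < t + (1-t)*v := by positivity
  set D := t + (1-t)*v with hDdef
  rw [div_rpow (by positivity) hD.le, div_rpow (by positivity) hD.le,
    div_rpow ht0.le hD.le, mul_rpow h1t.le hv0.le, mul_rpow ht0.le (by positivity),
    mul_rpow h1t.le h1v.le]
  rw [div_eq_mul_inv _ (D^(b-1)), div_eq_mul_inv _ (D^(c-1)), div_eq_mul_inv _ (D^(-(b+c))),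
    div_eq_mul_inv _ (D^2), ← Real.rpow_neg hD.le (b-1), ← Real.rpow_neg hD.le (c-1),
    ← Real.rpow_neg hD.le (-(b+c)), neg_neg]
  have hD2 : (D^2)⁻¹ = D ^ (-(2:ℝ)) := by
    rw [← Real.rpow_natCast D 2, ← Real.rpow_neg hD.le]; norm_num
  rw [hD2]
  calc t * (1-t) * D^(-(2:ℝ)) * ((1-t)^(b-1) * v^(b-1) * D^(-(b-1)) *
          (t^(c-1) * ((1-t)^(c-1) * (1-v)^(c-1)) * D^(-(c-1))) * (t^(-(b+c)) * D^(b+c)))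
      = (t^(1:ℝ) * t^(c-1) * t^(-(b+c))) * ((1-t)^(1:ℝ) * (1-t)^(b-1) * (1-t)^(c-1)) *
          (D^(-(2:ℝ)) * D^(-(b-1)) * D^(-(c-1)) * D^(b+c)) * (v^(b-1) * (1-v)^(c-1)) := by
        rw [Real.rpow_one, Real.rpow_one]; ring
    _ = t^(-b) * (1-t)^(b+c-1) * (D^(0:ℝ)) * (v^(b-1) * (1-v)^(c-1)) := by
        rw [← Real.rpow_add ht0, ← Real.rpow_add ht0,
          ← Real.rpow_add h1t, ← Real.rpow_add h1t,
          ← Real.rpow_add hD, ← Real.rpow_add hD, ← Real.rpow_add hD]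
        rw [show (1:ℝ) + (c-1) + -(b+c) = -b by ring,
          show (1:ℝ) + (b-1) + (c-1) = b+c-1 by ring,
          show -(2:ℝ) + -(b-1) + -(c-1) + (b+c) = 0 by ring]
    _ = t^(-b) * (1-t)^(b+c-1) * (v^(b-1) * (1-v)^(c-1)) := by
        rw [Real.rpow_zero, mul_one]

lemma key_algebra2 {a b c x t : ℝ} (u w : ℝ) (ht0 : 0 < t) (htx : t < x) (hx1 : x < 1) :
    (x^(a-1) * (1-x)^(b-1) / u) * x⁻¹ * ((t/x)^(a+b-1) * (1-t/x)^(c-1) / w)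
    = (t^(a+b-1) / (u * w)) * ((1-x)^(b-1) * ((x-t)^(c-1) * x^(-(b+c)))) := by
  have hx0 : 0 < x := lt_trans ht0 htx
  have hxt : 0 < x - t := by linarith
  rw [div_rpow ht0.le hx0.le, show 1 - t/x = (x-t)/x by field_simp,
    div_rpow hxt.le hx0.le, div_eq_mul_inv (t^(a+b-1)), div_eq_mul_inv ((x-t)^(c-1)),
    ← Real.rpow_neg hx0.le (a+b-1), ← Real.rpow_neg hx0.le (c-1),
    ← Real.rpow_neg_one x]
  calc x^(a-1) * (1-x)^(b-1) / u * x^(-1:ℝ) *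
          (t^(a+b-1) * x^(-(a+b-1)) * ((x-t)^(c-1) * x^(-(c-1))) / w)
      = (t^(a+b-1) / (u*w)) * ((1-x)^(b-1) *
          ((x-t)^(c-1) * (x^(a-1) * x^(-1:ℝ) * x^(-(a+b-1)) * x^(-(c-1))))) := by
        field_simp
    _ = (t^(a+b-1) / (u * w)) * ((1-x)^(b-1) * ((x-t)^(c-1) * x^(-(b+c)))) := by
        rw [← Real.rpow_add hx0, ← Real.rpow_add hx0, ← Real.rpow_add hx0,
          show a - 1 + (-1:ℝ) + -(a+b-1) + -(c-1) = -(b+c) by ring]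


lemma lintegral_image_1d {s : Set ℝ} {f f' : ℝ → ℝ}
    (hs : MeasurableSet s) (hf' : ∀ x ∈ s, HasDerivWithinAt f (f' x) s x) (hf : Set.InjOn f s)
    (g : ℝ → ENNReal) :
    ∫⁻ x in f '' s, g x = ∫⁻ x in s, ENNReal.ofReal |f' x| * g (f x) := by
  simpa only [ContinuousLinearMap.det_toSpanSingleton] using
    MeasureTheory.lintegral_image_eq_lintegral_abs_det_fderiv_mul volume hs
      (fun x hx => (hf' x hx).hasFDerivWithinAt) hf g

lemma beta_subst {b c t : ℝ} (hb : 0 < b) (hc : 0 < c) (ht0 : 0 < t) (ht1 : t < 1) :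
    ∫⁻ x in Set.Ioo t 1, ENNReal.ofReal ((1-x)^(b-1) * ((x-t)^(c-1) * x^(-(b+c))))
      = ENNReal.ofReal ((t^(-b) * (1-t)^(b+c-1)) *
          (Real.Gamma b * Real.Gamma c / Real.Gamma (b+c))) := by
  have h1t : 0 < 1 - t := by linarith
  set φ : ℝ → ℝ := fun v => t / (t + (1-t)*v) with hφ
  have hD : ∀ v : ℝ, 0 ≤ v → 0 < t + (1-t)*v := fun v hv => by positivity
  -- the image
  have himg : φ '' (Set.Ioo 0 1) = Set.Ioo t 1 := by
    ext x
    constructor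
    · rintro ⟨v, hv, rfl⟩
      have hD0 := hD v hv.1.le
      have hDlt : t + (1-t)*v < 1 := by nlinarith [hv.2]
      have hDgt : t < t + (1-t)*v := by nlinarith [hv.1]
      constructor
      · rw [lt_div_iff₀ hD0]; nlinarith
      · rw [div_lt_one hD0]; exact hDgt
    · intro hx
      have hx0 : 0 < x := lt_trans ht0 hx.1
      have h1x : 0 < 1 - x := by linarith [hx.2]
      refine ⟨t*(1-x)/(x*(1-t)), ⟨by positivity, ?_⟩, ?_⟩
      · rw [div_lt_one (by positivity)]; nlinarith [hx.1]
      · show t / (t + (1-t) * (t*(1-x)/(x*(1-t)))) = x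
        rw [show t + (1-t) * (t*(1-x)/(x*(1-t))) = t/x by field_simp; ring]
        rw [div_div_eq_mul_div, mul_comm, mul_div_assoc, div_self ht0.ne', mul_one]
  -- injectivity
  have hinj : Set.InjOn φ (Set.Ioo 0 1) := by
    intro u hu v hv huv
    have hDu := hD u hu.1.le
    have hDv := hD v hv.1.le
    simp only [hφ] at huv
    rw [div_eq_div_iff hDu.ne' hDv.ne'] at huv
    have : (1-t)*u = (1-t)*v := by nlinarith
    have := mul_left_cancel₀ h1t.ne' this
    exact this
  -- derivative
  have hder : ∀ v ∈ Set.Ioo (0:ℝ) 1,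
      HasDerivWithinAt φ (-(t*(1-t)) / (t+(1-t)*v)^2) (Set.Ioo 0 1) v := by
    intro v hv
    have hD0 := hD v hv.1.le
    have h : HasDerivAt φ ((0 * (t+(1-t)*v) - t*((1-t)*1)) / (t+(1-t)*v)^2) v := by
      exact (hasDerivAt_const v t).div
        (((hasDerivAt_id v).const_mul (1-t)).const_add t) hD0.ne'
    have h2 : (0 * (t+(1-t)*v) - t*((1-t)*1)) / (t+(1-t)*v)^2
        = -(t*(1-t)) / (t+(1-t)*v)^2 := by ring_nf
    rw [h2] at h
    exact h.hasDerivWithinAt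
  rw [← himg, lintegral_image_1d measurableSet_Ioo hder hinj]
  have hcong : ∀ v ∈ Set.Ioo (0:ℝ) 1,
      ENNReal.ofReal |(-(t*(1-t)) / (t+(1-t)*v)^2)|
          * ENNReal.ofReal ((1-φ v)^(b-1) * ((φ v - t)^(c-1) * (φ v)^(-(b+c))))
        = ENNReal.ofReal ((t^(-b) * (1-t)^(b+c-1)) * (v^(b-1) * (1-v)^(c-1))) := by
    intro v hv
    have hD0 := hD v hv.1.le
    have h1v : 0 < 1 - v := by linarith [hv.2]
    rw [← ENNReal.ofReal_mul (abs_nonneg _)]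
    congr 1
    have e1 : 1 - φ v = (1-t)*v / (t+(1-t)*v) := by
      simp only [hφ]; field_simp; ring
    have e2 : φ v - t = t*((1-t)*(1-v)) / (t+(1-t)*v) := by
      simp only [hφ]; field_simp; ring
    have e3 : |(-(t*(1-t)) / (t+(1-t)*v)^2)| = t*(1-t)/(t+(1-t)*v)^2 := by
      rw [abs_div, abs_neg, abs_of_pos (by positivity), abs_of_pos (by positivity)]
    rw [e1, e2, e3, show φ v = t / (t+(1-t)*v) from rfl]
    rw [← key_algebra ht0 ht1 hv.1 hv.2]
    ring
  rw [setLIntegral_congr_fun measurableSet_Ioo hcong]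
  have hnn : (0:ℝ) ≤ t^(-b) * (1-t)^(b+c-1) := by positivity
  simp_rw [ENNReal.ofReal_mul hnn]
  rw [lintegral_const_mul' _ _ ENNReal.ofReal_ne_top, beta_lintegral hb hc,
    ← ENNReal.ofReal_mul hnn]

lemma Hcalc {a b c : ℝ} (ha : 0 < a) (hb : 0 < b) (hc : 0 < c) (t : ℝ) :
    ∫⁻ x, ENNReal.ofReal (betaD a b x) * ENNReal.ofReal x⁻¹
        * ENNReal.ofReal (betaD (a+b) c (t/x))
      = ENNReal.ofReal (betaD a (b+c) t) := by
  have hGa := Real.Gamma_pos_of_pos ha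
  have hGb := Real.Gamma_pos_of_pos hb
  have hGc := Real.Gamma_pos_of_pos hc
  have hGab := Real.Gamma_pos_of_pos (by linarith : 0 < a + b)
  have hGbc := Real.Gamma_pos_of_pos (by linarith : 0 < b + c)
  have hGabc := Real.Gamma_pos_of_pos (by linarith : 0 < a + b + c)
  set F : ℝ → ENNReal := fun x => ENNReal.ofReal (betaD a b x) * ENNReal.ofReal x⁻¹
        * ENNReal.ofReal (betaD (a+b) c (t/x)) with hF
  have hFind : F = (Set.Ioo (0:ℝ) 1).indicator F := by
    funext x
    by_cases h : x ∈ Set.Ioo (0:ℝ) 1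
    · rw [Set.indicator_of_mem h]
    · rw [Set.indicator_of_notMem h, hF]
      simp only [betaD, if_neg h, ENNReal.ofReal_zero, zero_mul]
  rw [hFind, lintegral_indicator measurableSet_Ioo]
  by_cases ht : t ∈ Set.Ioo (0:ℝ) 1
  swap
  · -- t outside (0,1): both sides vanish
    have hzero : ∀ x ∈ Set.Ioo (0:ℝ) 1, F x = 0 := by
      intro x hx
      have hx0 := hx.1
      have hm : t/x ∉ Set.Ioo (0:ℝ) 1 := by
        simp only [Set.mem_Ioo, not_and_or, not_lt] at ht ⊢
        rcases ht with h0 | h1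
        · left; exact div_nonpos_iff.mpr (Or.inr ⟨h0, hx0.le⟩)
        · right; rw [le_div_iff₀ hx0]; nlinarith [hx.2]
      rw [hF]
      simp only [betaD, if_neg hm, ENNReal.ofReal_zero, mul_zero]
    rw [setLIntegral_congr_fun measurableSet_Ioo hzero]
    rw [lintegral_zero]
    unfold betaD
    rw [if_neg ht, ENNReal.ofReal_zero]
  · -- t inside (0,1)
    have ht0 := ht.1
    have ht1 := ht.2
    have hsub : Set.Ioo t 1 ⊆ Set.Ioo (0:ℝ) 1 := fun x hx => ⟨lt_trans ht0 hx.1, hx.2⟩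
    have hindeq : (Set.Ioo (0:ℝ) 1).indicator F = (Set.Ioo t 1).indicator F := by
      funext x
      by_cases h1 : x ∈ Set.Ioo t 1
      · rw [Set.indicator_of_mem h1, Set.indicator_of_mem (hsub h1)]
      · by_cases h2 : x ∈ Set.Ioo (0:ℝ) 1
        · rw [Set.indicator_of_mem h2, Set.indicator_of_notMem h1]
          have hxt : x ≤ t := by
            by_contra hgt
            exact h1 ⟨not_le.mp hgt, h2.2⟩
          have hm : t/x ∉ Set.Ioo (0:ℝ) 1 := by
            simp only [Set.mem_Ioo, not_and_or, not_lt]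
            right
            rw [le_div_iff₀ h2.1]
            nlinarith
          rw [hF]
          simp only [betaD, if_neg hm, ENNReal.ofReal_zero, mul_zero]
        · rw [Set.indicator_of_notMem h1, Set.indicator_of_notMem h2]
    rw [← lintegral_indicator measurableSet_Ioo, hindeq,
      lintegral_indicator measurableSet_Ioo]
    have hBab : (0:ℝ) < Real.Gamma a * Real.Gamma b / Real.Gamma (a+b) := by positivity
    have hBac : (0:ℝ) < Real.Gamma (a+b) * Real.Gamma c / Real.Gamma (a+b+c) := by positivity
    have hC : (0:ℝ) ≤ t^(a+b-1) / ((Real.Gamma a * Real.Gamma b / Real.Gamma (a+b))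
        * (Real.Gamma (a+b) * Real.Gamma c / Real.Gamma (a+b+c))) := by positivity
    have hcong : ∀ x ∈ Set.Ioo t 1, F x
        = ENNReal.ofReal ((t^(a+b-1) / ((Real.Gamma a * Real.Gamma b / Real.Gamma (a+b))
            * (Real.Gamma (a+b) * Real.Gamma c / Real.Gamma (a+b+c))))
          * ((1-x)^(b-1) * ((x-t)^(c-1) * x^(-(b+c))))) := by
      intro x hx
      have hx0 : 0 < x := lt_trans ht0 hx.1
      have hxm : x ∈ Set.Ioo (0:ℝ) 1 := hsub hx
      have htxm : t/x ∈ Set.Ioo (0:ℝ) 1 := by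
        constructor
        · positivity
        · rw [div_lt_one hx0]; exact hx.1
      simp only [hF]
      rw [← ENNReal.ofReal_mul (betaD_nonneg ha hb x), ← ENNReal.ofReal_mul
        (mul_nonneg (betaD_nonneg ha hb x) (inv_nonneg.mpr hx0.le))]
      congr 1
      simp only [betaD, if_pos hxm, if_pos htxm]
      rw [show Real.Gamma (a+b) * Real.Gamma c / Real.Gamma (a+b+c)
          = Real.Gamma (a+b) * Real.Gamma c / Real.Gamma ((a+b)+c) from rfl]
      rw [key_algebra2 _ _ ht0 hx.1 hx.2]
    rw [setLIntegral_congr_fun measurableSet_Ioo hcong]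
    simp_rw [ENNReal.ofReal_mul hC]
    rw [lintegral_const_mul' _ _ ENNReal.ofReal_ne_top, beta_subst hb hc ht0 ht1,
      ← ENNReal.ofReal_mul hC]
    congr 1
    simp only [betaD, if_pos ht]
    rw [show a + (b+c) = a+b+c from by ring]
    have hT : t^(a+b-1) * t^(-b:ℝ) = t^(a-1) := by
      rw [← Real.rpow_add ht0]; congr 1; ring
    rw [← hT]
    field_simp

lemma beta_conv {a b c : ℝ} (ha : 0 < a) (hb : 0 < b) (hc : 0 < c) :
    Measure.map (fun p : ℝ × ℝ => p.1 * p.2)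
      ((_root_.betaMeasure a b).prod (_root_.betaMeasure (a+b) c)) = _root_.betaMeasure a (b+c) := by
  haveI := isProbabilityMeasure_beta (show (0:ℝ) < a+b by linarith) hc
  haveI := isProbabilityMeasure_beta ha hb
  have hmul : Measurable (fun p : ℝ × ℝ => p.1 * p.2) := measurable_fst.mul measurable_snd
  have hDab := betaD_measurable a b
  have hDac := betaD_measurable (a+b) c
  have hDabc := betaD_measurable a (b+c)
  ext s hs
  rw [Measure.map_apply hmul hs]
  set ind : ℝ → ENNReal := s.indicator (fun _ => 1) with hind
  have hindmeas : Measurable ind := measurable_one.indicator hs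
  have hindne : ∀ t, ind t ≠ ⊤ := by
    intro t
    by_cases h : t ∈ s <;> simp [hind, h]
  rw [show _root_.betaMeasure a b = volume.withDensity (fun x => ENNReal.ofReal (betaD a b x)) from rfl,
    show _root_.betaMeasure (a+b) c = volume.withDensity (fun y => ENNReal.ofReal (betaD (a+b) c y)) from rfl]
  rw [Measure.prod_apply (hmul hs)]
  -- inner measure as a full-line integral with an indicator
  have hinner : ∀ x : ℝ, (volume.withDensity fun y => ENNReal.ofReal (betaD (a+b) c y))
      (Prod.mk x ⁻¹' ((fun p : ℝ × ℝ => p.1*p.2) ⁻¹' s))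
      = ∫⁻ y, ENNReal.ofReal (betaD (a+b) c y) * ind (x*y) := by
    intro x
    have hAmeas : MeasurableSet (Prod.mk x ⁻¹' ((fun p : ℝ × ℝ => p.1*p.2) ⁻¹' s)) :=
      measurable_prodMk_left (hmul hs)
    rw [withDensity_apply _ hAmeas, ← lintegral_indicator hAmeas]
    refine lintegral_congr fun y => ?_
    by_cases h : x * y ∈ s
    · rw [Set.indicator_of_mem
        (show y ∈ Prod.mk x ⁻¹' ((fun p : ℝ × ℝ => p.1*p.2) ⁻¹' s) from h), hind,
        Set.indicator_of_mem h, mul_one]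
    · rw [Set.indicator_of_notMem
        (show y ∉ Prod.mk x ⁻¹' ((fun p : ℝ × ℝ => p.1*p.2) ⁻¹' s) from h), hind,
        Set.indicator_of_notMem h, mul_zero]
  have houter : Measurable (fun x =>
      (volume.withDensity fun y => ENNReal.ofReal (betaD (a+b) c y))
        (Prod.mk x ⁻¹' ((fun p : ℝ × ℝ => p.1*p.2) ⁻¹' s))) :=
    measurable_measure_prodMk_left (hmul hs)
  rw [lintegral_withDensity_eq_lintegral_mul _
    (show Measurable fun x => ENNReal.ofReal (betaD a b x)
      from ENNReal.measurable_ofReal.comp hDab) houter]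
  -- pointwise reduction to a double integral
  have hK : ∀ x : ℝ, Measurable (fun u => ENNReal.ofReal (betaD (a+b) c (u/x)) * ind u) :=
    fun x => ((ENNReal.measurable_ofReal.comp (hDac.comp (measurable_id.div_const x)))).mul
      hindmeas
  have hpoint : ∀ x : ℝ,
      (((fun x => ENNReal.ofReal (betaD a b x)) * (fun x =>
        (volume.withDensity fun y => ENNReal.ofReal (betaD (a+b) c y))
          (Prod.mk x ⁻¹' ((fun p : ℝ × ℝ => p.1*p.2) ⁻¹' s)))) x)
      = ∫⁻ t, ENNReal.ofReal (betaD a b x) * ENNReal.ofReal x⁻¹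
          * (ENNReal.ofReal (betaD (a+b) c (t/x)) * ind t) := by
    intro x
    rw [Pi.mul_apply]
    by_cases hx : x ∈ Set.Ioo (0:ℝ) 1
    · have hx0 : 0 < x := hx.1
      rw [hinner x]
      have e1 : ∀ y : ℝ, ENNReal.ofReal (betaD (a+b) c y) * ind (x*y)
          = (fun u => ENNReal.ofReal (betaD (a+b) c (u/x)) * ind u) (x*y) := by
        intro y
        simp only
        rw [mul_div_cancel_left₀ _ hx0.ne']
      rw [lintegral_congr e1, ← lintegral_map (hK x) (measurable_const_mul x),
        Real.map_volume_mul_left hx0.ne', lintegral_smul_measure]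
      rw [lintegral_const_mul' _ _ (ENNReal.mul_ne_top ENNReal.ofReal_ne_top
        ENNReal.ofReal_ne_top)]
      rw [abs_of_nonneg (inv_nonneg.mpr hx0.le), smul_eq_mul, ← mul_assoc]
    · have hzero : ENNReal.ofReal (betaD a b x) = 0 := by
        unfold betaD; rw [if_neg hx, ENNReal.ofReal_zero]
      rw [hzero]
      simp only [zero_mul, lintegral_zero]
  rw [lintegral_congr hpoint]
  -- swap the two integrals
  have hGmeas : Measurable (Function.uncurry (fun x t =>
      ENNReal.ofReal (betaD a b x) * ENNReal.ofReal x⁻¹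
        * (ENNReal.ofReal (betaD (a+b) c (t/x)) * ind t))) := by
    apply Measurable.mul
    · exact ((ENNReal.measurable_ofReal.comp (hDab.comp measurable_fst))).mul
        (ENNReal.measurable_ofReal.comp (measurable_fst.inv))
    · exact ((ENNReal.measurable_ofReal.comp (hDac.comp
        (measurable_snd.div measurable_fst)))).mul (hindmeas.comp measurable_snd)
  rw [lintegral_lintegral_swap hGmeas.aemeasurable]
  -- compute the inner integral via Hcalc
  have hfinal : ∀ t : ℝ,
      ∫⁻ x, ENNReal.ofReal (betaD a b x) * ENNReal.ofReal x⁻¹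
          * (ENNReal.ofReal (betaD (a+b) c (t/x)) * ind t)
      = Set.indicator s (fun u => ENNReal.ofReal (betaD a (b+c) u)) t := by
    intro t
    have e : ∀ x : ℝ, ENNReal.ofReal (betaD a b x) * ENNReal.ofReal x⁻¹
          * (ENNReal.ofReal (betaD (a+b) c (t/x)) * ind t)
        = (ENNReal.ofReal (betaD a b x) * ENNReal.ofReal x⁻¹
            * ENNReal.ofReal (betaD (a+b) c (t/x))) * ind t := by
      intro x; ring
    rw [lintegral_congr e, lintegral_mul_const' _ _ (hindne t), Hcalc ha hb hc t]
    by_cases h : t ∈ s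
    · rw [Set.indicator_of_mem h, hind, Set.indicator_of_mem h, mul_one]
    · rw [Set.indicator_of_notMem h, hind, Set.indicator_of_notMem h, mul_zero]
  rw [lintegral_congr hfinal, lintegral_indicator hs,
    show _root_.betaMeasure a (b+c) = volume.withDensity (fun x => ENNReal.ofReal (betaD a (b+c) x))
      from rfl,
    withDensity_apply _ hs]

lemma map_mul_of_indep {Ω : Type*} [MeasurableSpace Ω] {P : Measure Ω} [IsFiniteMeasure P]
    {U V : Ω → ℝ} (hU : Measurable U) (hV : Measurable V) (h : IndepFun U V P) :
    Measure.map (fun ω => U ω * V ω) P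
      = Measure.map (fun p : ℝ × ℝ => p.1 * p.2) ((Measure.map U P).prod (Measure.map V P)) := by
  rw [← (indepFun_iff_map_prod_eq_prod_map_map hU.aemeasurable hV.aemeasurable).mp h,
    Measure.map_map (show Measurable (fun p : ℝ × ℝ => p.1 * p.2) from measurable_fst.mul measurable_snd) (hU.prodMk hV)]
  rfl

lemma iIndepFun_blocks_prod {ι Ω : Type*} [MeasurableSpace Ω] {P : Measure Ω} {f : ι → Ω → ℝ}
    (h : iIndepFun f P) (hm : ∀ i, Measurable (f i))
    {S T : Finset ι} (hST : Disjoint S T) :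
    IndepFun (∏ p ∈ S, f p) (∏ p ∈ T, f p) P := by
  classical
  have hfin := h.indepFun_finset S T hST hm
  have hφ : ∀ (s : Finset ι), Measurable (fun v : s → ℝ => ∏ i, v i) :=
    fun s => Finset.measurable_prod Finset.univ (fun i _ => measurable_pi_apply i)
  have h2 := hfin.comp (hφ S) (hφ T)
  convert h2 using 1 <;> funext ω <;>
    simp only [Finset.prod_apply, Function.comp_apply] <;>
    exact (Finset.prod_attach _ _).symm

/-- Row finset of pairs (j,i), i ∈ Icc j m, inside the pair subtype. -/
noncomputable def rowT (d j m : ℕ) : Finset {p : ℕ × ℕ // p.1 ≤ d - 2 ∧ p.1 ≤ p.2 ∧ p.2 ≤ d - 2} :=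
  if h : j ≤ d - 2 ∧ m ≤ d - 2 then
    (Finset.Icc j m).attach.image (fun i =>
      ⟨(j, i.1), ⟨h.1, (Finset.mem_Icc.mp i.2).1, le_trans (Finset.mem_Icc.mp i.2).2 h.2⟩⟩)
  else ∅

lemma rowT_prod {d j m : ℕ} (h : j ≤ d - 2 ∧ m ≤ d - 2) {M : Type*} [CommMonoid M]
    (F : ℕ → ℕ → M) : ∏ p ∈ rowT d j m, F p.1.1 p.1.2 = ∏ i ∈ Finset.Icc j m, F j i := by
  rw [rowT, dif_pos h,
    Finset.prod_image (fun x _ y _ hxy => Subtype.ext (congrArg (fun q => q.1.2) hxy))]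
  exact Finset.prod_attach (Finset.Icc j m) (fun i => F j i)

lemma rowT_mem {d j m : ℕ} {p} (hp : p ∈ rowT d j m) : p.1.1 = j ∧ p.1.2 ≤ m := by
  rw [rowT] at hp
  split_ifs at hp with h
  · obtain ⟨i, hi, rfl⟩ := Finset.mem_image.mp hp
    exact ⟨rfl, (Finset.mem_Icc.mp i.2).2⟩
  · simp at hp

/-- Column finset of indices j ∈ Icc 1 n inside the index subtype. -/
noncomputable def colT (d n : ℕ) : Finset {j : ℕ // 1 ≤ j ∧ j ≤ d - 1} :=
  if h : n ≤ d - 1 then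
    (Finset.Icc 1 n).attach.image (fun j =>
      ⟨j.1, ⟨(Finset.mem_Icc.mp j.2).1, le_trans (Finset.mem_Icc.mp j.2).2 h⟩⟩)
  else ∅

lemma colT_prod {d n : ℕ} (h : n ≤ d - 1) {M : Type*} [CommMonoid M]
    (F : ℕ → M) : ∏ p ∈ colT d n, F p.1 = ∏ j ∈ Finset.Icc 1 n, F j := by
  rw [colT, dif_pos h,
    Finset.prod_image (fun x _ y _ hxy => Subtype.ext (congrArg (fun q => q.1) hxy))]
  exact Finset.prod_attach (Finset.Icc 1 n) (fun i => F i)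

lemma colT_mem {d n : ℕ} {p} (hp : p ∈ colT d n) : p.1 ≤ n := by
  rw [colT] at hp
  split_ifs at hp with h
  · obtain ⟨i, hi, rfl⟩ := Finset.mem_image.mp hp
    exact (Finset.mem_Icc.mp i.2).2
  · simp at hp

theorem stmt2 (η : ℝ) (hη : 1 < η) (d : ℕ) (hd : 2 ≤ d)
    {Ω : Type*} [MeasurableSpace Ω] (P : Measure Ω) [IsProbabilityMeasure P]
    (X : ℕ → ℕ → Ω → ℝ) (Y : ℕ → Ω → ℝ)
    (hXindep : iIndepFun
      (fun p : {p : ℕ × ℕ // p.1 ≤ d - 2 ∧ p.1 ≤ p.2 ∧ p.2 ≤ d - 2} => X p.1.1 p.1.2) P)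
    (hX : ∀ j i : ℕ, j ≤ d - 2 → j ≤ i → i ≤ d - 2 →
      HasBetaDist P (X j i) (η + (i : ℝ) / 2) (1 / 2))
    (hYindep : iIndepFun
      (fun j : {j : ℕ // 1 ≤ j ∧ j ≤ d - 1} => Y j) P)
    (hY : ∀ j : ℕ, 1 ≤ j → j ≤ d - 1 →
      HasBetaDist P (Y j) (η + ((j : ℝ) - 1) / 2) (((d : ℝ) - (j : ℝ)) / 2)) :
    Measure.map (fun ω => ∏ j ∈ Finset.range (d - 1), ∏ i ∈ Finset.Icc j (d - 2), X j i ω) P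
      = Measure.map (fun ω => ∏ j ∈ Finset.Icc 1 (d - 1), Y j ω) P := by
  have hgmeas : ∀ p : {p : ℕ × ℕ // p.1 ≤ d - 2 ∧ p.1 ≤ p.2 ∧ p.2 ≤ d - 2},
      Measurable ((fun p : {p : ℕ × ℕ // p.1 ≤ d - 2 ∧ p.1 ≤ p.2 ∧ p.2 ≤ d - 2} =>
        X p.1.1 p.1.2) p) :=
    fun p => (hX p.1.1 p.1.2 p.2.1 p.2.2.1 p.2.2.2).1
  -- inner product law
  have inner : ∀ j m, j ≤ d - 2 → j ≤ m → m ≤ d - 2 →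
      Measure.map (fun ω => ∏ i ∈ Finset.Icc j m, X j i ω) P
        = _root_.betaMeasure (η + (j:ℝ)/2) (((m:ℝ) - (j:ℝ) + 1)/2) := by
    intro j m hj hjm
    induction m, hjm using Nat.le_induction with
    | base =>
      intro hm
      have h0 := (hX j j hj le_rfl hj).2
      have e : (fun ω => ∏ i ∈ Finset.Icc j j, X j i ω) = X j j := by
        funext ω; rw [Finset.Icc_self, Finset.prod_singleton]
      rw [e, h0]
      congr 1; ring
    | succ m hjm ih =>
      intro hm
      have hm' : m ≤ d - 2 := by omega
      have hU : Measurable (fun ω => ∏ i ∈ Finset.Icc j m, X j i ω) :=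
        Finset.measurable_prod _ (fun i hi => (hX j i hj (Finset.mem_Icc.mp hi).1
          (le_trans (Finset.mem_Icc.mp hi).2 hm')).1)
      have hV : Measurable (X j (m+1)) := (hX j (m+1) hj (by omega) hm).1
      have hsplit : (fun ω => ∏ i ∈ Finset.Icc j (m+1), X j i ω)
          = fun ω => (∏ i ∈ Finset.Icc j m, X j i ω) * X j (m+1) ω := by
        funext ω; rw [Finset.prod_Icc_succ_top (by omega : j ≤ m+1)]
      have hindep : IndepFun (fun ω => ∏ i ∈ Finset.Icc j m, X j i ω) (X j (m+1)) P := by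
        have hdisj : Disjoint (rowT d j m)
            ({(⟨(j, m+1), ⟨hj, by omega, hm⟩⟩ : {p : ℕ × ℕ // p.1 ≤ d - 2 ∧ p.1 ≤ p.2 ∧ p.2 ≤ d - 2})} : Finset _) := by
          rw [Finset.disjoint_singleton_right]
          intro hqmem
          have := (rowT_mem hqmem).2
          simp at this
        have hblocks := iIndepFun_blocks_prod hXindep hgmeas hdisj
        have e1 : (∏ p ∈ rowT d j m,
              (fun p : {p : ℕ × ℕ // p.1 ≤ d - 2 ∧ p.1 ≤ p.2 ∧ p.2 ≤ d - 2} => X p.1.1 p.1.2) p)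
            = fun ω => ∏ i ∈ Finset.Icc j m, X j i ω := by
          funext ω
          rw [Finset.prod_apply]
          exact rowT_prod ⟨hj, hm'⟩ (fun a b => X a b ω)
        have e2 : (∏ p ∈ ({(⟨(j, m+1), ⟨hj, by omega, hm⟩⟩ :
              {p : ℕ × ℕ // p.1 ≤ d - 2 ∧ p.1 ≤ p.2 ∧ p.2 ≤ d - 2})} : Finset _),
              (fun p : {p : ℕ × ℕ // p.1 ≤ d - 2 ∧ p.1 ≤ p.2 ∧ p.2 ≤ d - 2} => X p.1.1 p.1.2) p)
            = X j (m+1) := by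
          rw [Finset.prod_singleton]
        rwa [e1, e2] at hblocks
      rw [hsplit, map_mul_of_indep hU hV hindep, ih hm', (hX j (m+1) hj (by omega) hm).2]
      have harg : η + ((m+1 : ℕ):ℝ)/2 = (η + (j:ℝ)/2) + (((m:ℝ) - (j:ℝ) + 1)/2) := by
        push_cast; ring
      have hb1 : (0:ℝ) < η + (j:ℝ)/2 := by
        have : (0:ℝ) ≤ (j:ℝ) := Nat.cast_nonneg j
        linarith
      have hb2 : (0:ℝ) < ((m:ℝ) - (j:ℝ) + 1)/2 := by
        have : (j:ℝ) ≤ (m:ℝ) := Nat.cast_le.mpr hjm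
        linarith
      rw [harg, beta_conv hb1 hb2 (by norm_num)]
      congr 1; push_cast; ring
  -- laws of the inner products and of the Y's
  have hZlaw : ∀ j, j ≤ d - 2 →
      Measure.map (fun ω => ∏ i ∈ Finset.Icc j (d-2), X j i ω) P
        = _root_.betaMeasure (η + (j:ℝ)/2) (((d:ℝ) - 1 - (j:ℝ))/2) := by
    intro j hj
    rw [inner j (d-2) hj hj le_rfl]
    congr 1
    have : ((d-2 : ℕ):ℝ) = (d:ℝ) - 2 := by
      have : (2:ℝ) ≤ (d:ℝ) := by exact_mod_cast hd
      push_cast [Nat.cast_sub hd]; ring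
    rw [this]; ring
  have hZmeas : ∀ j, j ≤ d - 2 → Measurable (fun ω => ∏ i ∈ Finset.Icc j (d-2), X j i ω) :=
    fun j hj => Finset.measurable_prod _ (fun i hi => (hX j i hj (Finset.mem_Icc.mp hi).1
      (Finset.mem_Icc.mp hi).2).1)
  -- outer induction
  have outer : ∀ n, n ≤ d - 2 →
      Measure.map (fun ω => ∏ j ∈ Finset.range (n+1), ∏ i ∈ Finset.Icc j (d-2), X j i ω) P
        = Measure.map (fun ω => ∏ j ∈ Finset.Icc 1 (n+1), Y j ω) P := by
    intro n
    induction n with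
    | zero =>
      intro h0
      have e1 : (fun ω => ∏ j ∈ Finset.range 1, ∏ i ∈ Finset.Icc j (d-2), X j i ω)
          = fun ω => ∏ i ∈ Finset.Icc 0 (d-2), X 0 i ω := by
        funext ω; rw [Finset.prod_range_one]
      have e2 : (fun ω => ∏ j ∈ Finset.Icc 1 1, Y j ω) = Y 1 := by
        funext ω; rw [Finset.Icc_self, Finset.prod_singleton]
      rw [e1, e2, hZlaw 0 (by omega), (hY 1 le_rfl (by omega)).2]
      norm_num
    | succ n ih =>
      intro h
      have hn : n ≤ d - 2 := by omega
      have eL : (fun ω => ∏ j ∈ Finset.range (n+2), ∏ i ∈ Finset.Icc j (d-2), X j i ω)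
          = fun ω => (∏ j ∈ Finset.range (n+1), ∏ i ∈ Finset.Icc j (d-2), X j i ω)
              * ∏ i ∈ Finset.Icc (n+1) (d-2), X (n+1) i ω := by
        funext ω; rw [Finset.prod_range_succ]
      have eR : (fun ω => ∏ j ∈ Finset.Icc 1 (n+2), Y j ω)
          = fun ω => (∏ j ∈ Finset.Icc 1 (n+1), Y j ω) * Y (n+2) ω := by
        funext ω; rw [Finset.prod_Icc_succ_top (by omega : 1 ≤ n+2)]
      have hUmeas : Measurable (fun ω => ∏ j ∈ Finset.range (n+1), ∏ i ∈ Finset.Icc j (d-2), X j i ω) :=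
        Finset.measurable_prod _ (fun j hj => hZmeas j (by
          have := Finset.mem_range.mp hj; omega))
      have hVmeas : Measurable (fun ω => ∏ i ∈ Finset.Icc (n+1) (d-2), X (n+1) i ω) :=
        hZmeas (n+1) h
      have hYmeas : ∀ k, 1 ≤ k → k ≤ d - 1 → Measurable (Y k) := fun k h1 h2 => (hY k h1 h2).1
      have hUmeas' : Measurable (fun ω => ∏ j ∈ Finset.Icc 1 (n+1), Y j ω) :=
        Finset.measurable_prod _ (fun j hj => hYmeas j (Finset.mem_Icc.mp hj).1 (by
          have := (Finset.mem_Icc.mp hj).2; omega))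
      -- independence on the X side
      have hindepL : IndepFun
          (fun ω => ∏ j ∈ Finset.range (n+1), ∏ i ∈ Finset.Icc j (d-2), X j i ω)
          (fun ω => ∏ i ∈ Finset.Icc (n+1) (d-2), X (n+1) i ω) P := by
        have hdisj : Disjoint ((Finset.range (n+1)).biUnion (fun j => rowT d j (d-2)))
            (rowT d (n+1) (d-2)) := by
          rw [Finset.disjoint_left]
          intro p hp hp'
          obtain ⟨j, hj, hpj⟩ := Finset.mem_biUnion.mp hp
          have h1 := (rowT_mem hpj).1
          have h2 := (rowT_mem hp').1
          have := Finset.mem_range.mp hj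
          omega
        have hblocks := iIndepFun_blocks_prod hXindep hgmeas hdisj
        have e1 : (∏ p ∈ (Finset.range (n+1)).biUnion (fun j => rowT d j (d-2)),
              (fun p : {p : ℕ × ℕ // p.1 ≤ d - 2 ∧ p.1 ≤ p.2 ∧ p.2 ≤ d - 2} => X p.1.1 p.1.2) p)
            = fun ω => ∏ j ∈ Finset.range (n+1), ∏ i ∈ Finset.Icc j (d-2), X j i ω := by
          funext ω
          rw [Finset.prod_apply, Finset.prod_biUnion ?_]
          · refine Finset.prod_congr rfl (fun j hj => ?_)
            exact rowT_prod ⟨by have := Finset.mem_range.mp hj; omega, le_rfl⟩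
              (fun a b => X a b ω)
          · intro j hj j' hj' hne
            simp only [Function.onFun]
            rw [Finset.disjoint_left]
            intro p hp hp'
            exact hne ((rowT_mem hp).1.symm.trans (rowT_mem hp').1)
        have e2 : (∏ p ∈ rowT d (n+1) (d-2),
              (fun p : {p : ℕ × ℕ // p.1 ≤ d - 2 ∧ p.1 ≤ p.2 ∧ p.2 ≤ d - 2} => X p.1.1 p.1.2) p)
            = fun ω => ∏ i ∈ Finset.Icc (n+1) (d-2), X (n+1) i ω := by
          funext ω
          rw [Finset.prod_apply]
          exact rowT_prod ⟨h, le_rfl⟩ (fun a b => X a b ω)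
        rwa [e1, e2] at hblocks
      -- independence on the Y side
      have hindepR : IndepFun (fun ω => ∏ j ∈ Finset.Icc 1 (n+1), Y j ω) (Y (n+2)) P := by
        have hdisj : Disjoint (colT d (n+1))
            ({(⟨n+2, ⟨by omega, by omega⟩⟩ : {j : ℕ // 1 ≤ j ∧ j ≤ d - 1})} : Finset _) := by
          rw [Finset.disjoint_singleton_right]
          intro hqmem
          have := colT_mem hqmem
          simp at this
        have hblocks := iIndepFun_blocks_prod hYindep
          (fun q => (hY q.1 q.2.1 q.2.2).1) hdisj
        have e1 : (∏ p ∈ colT d (n+1),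
              (fun j : {j : ℕ // 1 ≤ j ∧ j ≤ d - 1} => Y j) p)
            = fun ω => ∏ j ∈ Finset.Icc 1 (n+1), Y j ω := by
          funext ω
          rw [Finset.prod_apply]
          exact colT_prod (by omega) (fun a => Y a ω)
        have e2 : (∏ p ∈ ({(⟨n+2, ⟨by omega, by omega⟩⟩ : {j : ℕ // 1 ≤ j ∧ j ≤ d - 1})} : Finset _),
              (fun j : {j : ℕ // 1 ≤ j ∧ j ≤ d - 1} => Y j) p) = Y (n+2) := by
          rw [Finset.prod_singleton]
        rwa [e1, e2] at hblocks
      rw [eL, eR, map_mul_of_indep hUmeas hVmeas hindepL,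
        map_mul_of_indep hUmeas' (hYmeas (n+2) (by omega) (by omega)) hindepR,
        ih hn, hZlaw (n+1) h, (hY (n+2) (by omega) (by omega)).2]
      congr 2 <;> push_cast <;> ring
  have hfinal := outer (d-2) (le_rfl)
  have e : d - 2 + 1 = d - 1 := by omega
  rw [e] at hfinal
  exact hfinal
end

section
/- Fix a real η > 1. For each integer d ≥ 2 let D_d^{(η)} = ∏_{j=1}^{d−1} Y_{d,j}, where Y_{d,1},…,Y_{d,d−1} are independent random variables with Y_{d,j} having the Beta(η + (j−1)/2, (d−j)/2) distribution. Then (D_d^{(η)})^{1/d} converges in probability to the constant 1/e as d → ∞; i.e., for every ε > 0, P(|(D_d^{(η)})^{1/d} − e^{−1}| > ε) → 0. -/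
open MeasureTheory ProbabilityTheory Real Filter Finset

open scoped ENNReal

lemma betaDens_measurable (a b : ℝ) : Measurable (fun x : ℝ =>
    ENNReal.ofReal (if x ∈ Set.Ioo (0 : ℝ) 1 then
      x ^ (a - 1) * (1 - x) ^ (b - 1) / (Real.Gamma a * Real.Gamma b / Real.Gamma (a + b))
    else 0)) := by
  apply Measurable.ennreal_ofReal
  apply Measurable.ite measurableSet_Ioo _ measurable_const
  have h1 : Measurable fun x : ℝ => x ^ (a-1) := by fun_prop
  have h2 : Measurable fun x : ℝ => (1-x) ^ (b-1) := by fun_prop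
  exact (h1.mul h2).div_const _

lemma betaMeasure_compl_Ioo (a b : ℝ) : _root_.betaMeasure a b (Set.Ioo (0:ℝ) 1)ᶜ = 0 := by
  rw [_root_.betaMeasure, withDensity_apply _ (measurableSet_Ioo.compl)]
  have : ∀ x ∈ (Set.Ioo (0:ℝ) 1)ᶜ, ENNReal.ofReal (if x ∈ Set.Ioo (0:ℝ) 1 then
      x ^ (a - 1) * (1 - x) ^ (b - 1) / (Real.Gamma a * Real.Gamma b / Real.Gamma (a + b))
    else 0) = 0 := by
    intro x hx
    simp only [Set.mem_compl_iff] at hx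
    rw [if_neg hx, ENNReal.ofReal_zero]
  rw [setLIntegral_congr_fun measurableSet_Ioo.compl this, lintegral_zero]

lemma real_betaIntegral {a b : ℝ} (ha : 0 < a) (hb : 0 < b) :
    ∫ x in (0:ℝ)..1, x ^ (a - 1) * (1 - x) ^ (b - 1) =
      Real.Gamma a * Real.Gamma b / Real.Gamma (a + b) := by
  have h := Complex.Gamma_mul_Gamma_eq_betaIntegral (s := (a:ℂ)) (t := (b:ℂ))
    (by simpa using ha) (by simpa using hb)
  have hβ : Complex.betaIntegral (a:ℂ) (b:ℂ) =
      ((∫ x in (0:ℝ)..1, x ^ (a - 1) * (1 - x) ^ (b - 1) : ℝ) : ℂ) := by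
    rw [Complex.betaIntegral, ← intervalIntegral.integral_ofReal]
    apply intervalIntegral.integral_congr
    intro x hx
    rw [Set.uIcc_of_le (by norm_num : (0:ℝ) ≤ 1)] at hx
    have hx0 : 0 ≤ x := hx.1
    have hx1 : 0 ≤ 1 - x := by linarith [hx.2]
    have e1 : ((a:ℂ) - 1) = ((a - 1 : ℝ) : ℂ) := by push_cast; ring
    have e2 : ((b:ℂ) - 1) = ((b - 1 : ℝ) : ℂ) := by push_cast; ring
    have e3 : (1 - (x:ℂ)) = ((1 - x : ℝ) : ℂ) := by push_cast; ring
    dsimp only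
    rw [e1, e2, e3, ← Complex.ofReal_cpow hx0, ← Complex.ofReal_cpow hx1]
    push_cast
    ring
  rw [hβ, ← Complex.ofReal_add, Complex.Gamma_ofReal, Complex.Gamma_ofReal,
    Complex.Gamma_ofReal, ← Complex.ofReal_mul, ← Complex.ofReal_mul] at h
  have h' := Complex.ofReal_inj.mp h
  have hG : Real.Gamma (a + b) ≠ 0 := (Real.Gamma_pos_of_pos (by linarith)).ne'
  field_simp
  linarith [h']

lemma beta_integrableOn {a b : ℝ} (ha : 0 < a) (hb : 0 < b) :
    IntegrableOn (fun x : ℝ => x ^ (a - 1) * (1 - x) ^ (b - 1)) (Set.Ioo 0 1) := by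
  have hC : IntervalIntegrable (fun x : ℝ => (x:ℂ) ^ ((a:ℂ)-1) * (1-(x:ℂ)) ^ ((b:ℂ)-1))
      volume 0 1 := Complex.betaIntegral_convergent (by simpa using ha) (by simpa using hb)
  have hC' : IntegrableOn (fun x : ℝ => (x:ℂ) ^ ((a:ℂ)-1) * (1-(x:ℂ)) ^ ((b:ℂ)-1))
      (Set.Ioo 0 1) := by
    have := (intervalIntegrable_iff_integrableOn_Ioc_of_le (by norm_num : (0:ℝ) ≤ 1)).mp hC
    exact this.mono_set Set.Ioo_subset_Ioc_self
  have : IntegrableOn (fun x : ℝ =>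
      ((fun x : ℝ => (x:ℂ) ^ ((a:ℂ)-1) * (1-(x:ℂ)) ^ ((b:ℂ)-1)) x).re) (Set.Ioo 0 1) :=
    hC'.re
  apply this.congr_fun _ measurableSet_Ioo
  intro x hx
  have hx0 : (0:ℝ) ≤ x := hx.1.le
  have hx1 : (0:ℝ) ≤ 1 - x := by linarith [hx.2.le]
  have e1 : ((a:ℂ) - 1) = ((a - 1 : ℝ) : ℂ) := by push_cast; ring
  have e2 : ((b:ℂ) - 1) = ((b - 1 : ℝ) : ℂ) := by push_cast; ring
  have e3 : (1 - (x:ℂ)) = ((1 - x : ℝ) : ℂ) := by push_cast; ring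
  simp only [e1, e2, e3, ← Complex.ofReal_cpow hx0, ← Complex.ofReal_cpow hx1]
  rw [← Complex.ofReal_mul, Complex.ofReal_re]

lemma beta_lintegral_Ioo {a b : ℝ} (ha : 0 < a) (hb : 0 < b) :
    ∫⁻ x in Set.Ioo (0:ℝ) 1, ENNReal.ofReal (x ^ (a - 1) * (1 - x) ^ (b - 1)) =
      ENNReal.ofReal (Real.Gamma a * Real.Gamma b / Real.Gamma (a + b)) := by
  rw [← real_betaIntegral ha hb,
    intervalIntegral.integral_of_le (by norm_num : (0:ℝ) ≤ 1),
    integral_Ioc_eq_integral_Ioo,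
    ← ofReal_integral_eq_lintegral_ofReal (beta_integrableOn ha hb)]
  filter_upwards [self_mem_ae_restrict measurableSet_Ioo] with x hx
  have hx0 : (0:ℝ) ≤ x := hx.1.le
  have hx1 : (0:ℝ) ≤ 1 - x := by linarith [hx.2.le]
  positivity

lemma betaMeasure_lintegral_rpow {a b : ℝ} (c : ℝ) (ha : 0 < a) (hb : 0 < b) (hc : 0 < a + c) :
    ∫⁻ x, ENNReal.ofReal (x ^ c) ∂(_root_.betaMeasure a b) =
      ENNReal.ofReal ((Real.Gamma (a+c) * Real.Gamma b / Real.Gamma (a+c+b)) /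
        (Real.Gamma a * Real.Gamma b / Real.Gamma (a + b))) := by
  have hmc : Measurable fun x : ℝ => ENNReal.ofReal (x ^ c) := by fun_prop
  rw [_root_.betaMeasure, lintegral_withDensity_eq_lintegral_mul _ (betaDens_measurable a b) hmc]
  set B := Real.Gamma a * Real.Gamma b / Real.Gamma (a + b) with hBdef
  have hB : 0 < B := by
    have := Real.Gamma_pos_of_pos ha
    have := Real.Gamma_pos_of_pos hb
    have := Real.Gamma_pos_of_pos (by linarith : (0:ℝ) < a + b)
    positivity
  have heq : ∀ x : ℝ, ((fun x => ENNReal.ofReal (if x ∈ Set.Ioo (0:ℝ) 1 then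
        x ^ (a - 1) * (1 - x) ^ (b - 1) / B else 0)) * fun x => ENNReal.ofReal (x ^ c)) x
      = (Set.Ioo (0:ℝ) 1).indicator
          (fun x => ENNReal.ofReal (x ^ (a + c - 1) * (1 - x) ^ (b - 1)) / ENNReal.ofReal B) x := by
    intro x
    by_cases hx : x ∈ Set.Ioo (0:ℝ) 1
    · rw [Set.indicator_of_mem hx]
      simp only [Pi.mul_apply, if_pos hx]
      have hx0 : 0 < x := hx.1
      have hx1 : 0 ≤ 1 - x := by linarith [hx.2.le]
      have hxa : x ^ (a + c - 1) = x ^ (a - 1) * x ^ c := by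
        rw [← Real.rpow_add hx0]; ring_nf
      rw [hxa, ENNReal.ofReal_div_of_pos hB, div_eq_mul_inv, div_eq_mul_inv, mul_right_comm,
        ← ENNReal.ofReal_mul (by positivity)]
      ring_nf
    · rw [Set.indicator_of_notMem hx]
      simp only [Pi.mul_apply, if_neg hx, ENNReal.ofReal_zero, zero_mul]
  rw [lintegral_congr heq, lintegral_indicator measurableSet_Ioo _]
  simp_rw [ENNReal.div_eq_inv_mul]
  rw [lintegral_const_mul' _ _ (by simpa using hB : (ENNReal.ofReal B)⁻¹ ≠ ⊤),
    beta_lintegral_Ioo hc hb, ← ENNReal.div_eq_inv_mul, ← ENNReal.ofReal_div_of_pos hB]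

lemma betaMeasure_lintegral_id {a b : ℝ} (ha : 0 < a) (hb : 0 < b) :
    ∫⁻ x, ENNReal.ofReal x ∂(_root_.betaMeasure a b) = ENNReal.ofReal (a / (a + b)) := by
  have h := betaMeasure_lintegral_rpow 1 ha hb (by linarith)
  rw [lintegral_congr (fun x => by rw [Real.rpow_one])] at h
  rw [h]
  congr 1
  have g1 : Real.Gamma (a + 1) = a * Real.Gamma a := Real.Gamma_add_one ha.ne'
  have g2 : Real.Gamma (a + 1 + b) = (a + b) * Real.Gamma (a + b) := by
    rw [show a + 1 + b = (a + b) + 1 by ring, Real.Gamma_add_one (by positivity)]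
  have p1 := Real.Gamma_pos_of_pos ha
  have p2 := Real.Gamma_pos_of_pos hb
  have p3 := Real.Gamma_pos_of_pos (by linarith : (0:ℝ) < a + b)
  rw [g1, g2]
  field_simp

lemma betaMeasure_lintegral_inv {a b : ℝ} (ha : 1 < a) (hb : 0 < b) :
    ∫⁻ x, ENNReal.ofReal x⁻¹ ∂(_root_.betaMeasure a b) = ENNReal.ofReal ((a + b - 1) / (a - 1)) := by
  have h := betaMeasure_lintegral_rpow (a := a) (b := b) (-1) (by linarith) hb (by linarith)
  rw [lintegral_congr (fun x => by rw [Real.rpow_neg_one])] at h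
  rw [h]
  congr 1
  have ha1 : (0:ℝ) < a - 1 := by linarith
  have g1 : Real.Gamma a = (a - 1) * Real.Gamma (a - 1) := by
    have := Real.Gamma_add_one ha1.ne'
    rwa [show (a - 1) + 1 = a by ring] at this
  have g2 : Real.Gamma (a + b) = (a + b - 1) * Real.Gamma (a + b - 1) := by
    have := Real.Gamma_add_one (by linarith : (0:ℝ) < a + b - 1).ne'
    rwa [show (a + b - 1) + 1 = a + b by ring] at this
  have p1 := Real.Gamma_pos_of_pos ha1
  have p2 := Real.Gamma_pos_of_pos hb
  have p3 := Real.Gamma_pos_of_pos (by linarith : (0:ℝ) < a + b - 1)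
  rw [show a + -1 = a - 1 by ring, show a - 1 + b = a + b - 1 by ring, g1, g2]
  field_simp

open ProbabilityTheory in
lemma lintegral_prod_of_indep {ι Ω : Type*} [MeasurableSpace Ω] {P : Measure Ω}
    [IsProbabilityMeasure P]
    (f : ι → Ω → ℝ≥0∞) (hindep : iIndepFun f P)
    (hmeas : ∀ i, Measurable (f i)) (s : Finset ι) :
    ∫⁻ ω, ∏ i ∈ s, f i ω ∂P = ∏ i ∈ s, ∫⁻ ω, f i ω ∂P := by
  classical
  induction s using Finset.induction with
  | empty => simp
  | @insert i s hi ih =>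
    have hI : IndepFun (∏ j ∈ s, f j) (f i) P :=
      hindep.indepFun_finsetProd_of_notMem hmeas hi
    have hm : Measurable (∏ j ∈ s, f j) := by
      rw [Finset.prod_fn]
      exact Finset.measurable_prod s fun j _ => hmeas j
    have key := lintegral_mul_eq_lintegral_mul_lintegral_of_indepFun hm (hmeas i) hI
    calc ∫⁻ ω, ∏ j ∈ insert i s, f j ω ∂P
        = ∫⁻ ω, ((∏ j ∈ s, f j) * f i) ω ∂P := by
          apply lintegral_congr; intro ω
          simp only [Pi.mul_apply, Finset.prod_apply, Finset.prod_insert hi]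
          ring
      _ = (∫⁻ ω, (∏ j ∈ s, f j) ω ∂P) * ∫⁻ ω, f i ω ∂P := key
      _ = ∏ j ∈ insert i s, ∫⁻ ω, f j ω ∂P := by
          rw [Finset.prod_insert hi, ← ih]
          simp only [Finset.prod_apply]
          ring

lemma key_log_limit {θ : ℝ} (hθ : 0 < θ) :
    Tendsto (fun m : ℕ => (m:ℝ)⁻¹ *
        ∑ j ∈ Icc 1 m, Real.log ((θ + ((j:ℝ) - 1)/2) / (θ + (m:ℝ)/2)))
      atTop (nhds (-1)) := by
  set δ : ℕ → ℝ := fun i => -(((i:ℝ)+1) * Real.log (1 + 1/(2*θ+i))) with hδ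
  have hpos : ∀ x : ℝ, 0 ≤ x → 0 < θ + x/2 := fun x hx => by linarith
  have h2pos : ∀ i : ℕ, (0:ℝ) < 2*θ + i := fun i => by positivity
  have hsum : ∀ m : ℕ, ∑ i ∈ range m, δ i =
      (∑ i ∈ range m, Real.log (θ + (i:ℝ)/2)) - m * Real.log (θ + (m:ℝ)/2) := by
    intro m
    induction m with
    | zero => simp
    | succ m ih =>
      rw [Finset.sum_range_succ, Finset.sum_range_succ, ih]
      have hm : (0:ℝ) < θ + (m:ℝ)/2 := hpos _ (by positivity)
      have hr : (0:ℝ) < 1 + 1/(2*θ+m) := by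
        have := h2pos m; positivity
      have hfac : θ + ((m:ℕ)+1:ℝ)/2 = (θ + (m:ℝ)/2) * (1 + 1/(2*θ+m)) := by
        have := (h2pos m).ne'
        field_simp
        ring
      have hlog : Real.log (θ + (((m+1):ℕ):ℝ)/2)
          = Real.log (θ + (m:ℝ)/2) + Real.log (1 + 1/(2*θ+m)) := by
        push_cast
        rw [hfac, Real.log_mul hm.ne' hr.ne']
      rw [hlog]
      push_cast
      ring
  have L1 : Tendsto (fun i : ℕ => (2*θ+(i:ℝ)) * Real.log (1 + 1/(2*θ+i))) atTop (nhds 1) := by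
    have hcomp : Tendsto (fun i : ℕ => 2*θ+(i:ℝ)) atTop atTop :=
      tendsto_atTop_add_const_left _ _ tendsto_natCast_atTop_atTop
    exact (Real.tendsto_mul_log_one_add_div_atTop 1).comp hcomp
  have L2 : Tendsto (fun i : ℕ => ((i:ℝ)+1)/(2*θ+i)) atTop (nhds 1) := by
    have h0 : Tendsto (fun i : ℕ => (1-2*θ) * (2*θ+(i:ℝ))⁻¹) atTop (nhds ((1-2*θ) * 0)) := by
      apply Tendsto.const_mul
      exact (tendsto_inv_atTop_zero).comp (tendsto_atTop_add_const_left _ _ tendsto_natCast_atTop_atTop)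
    rw [mul_zero] at h0
    have := h0.const_add 1
    rw [add_zero] at this
    apply this.congr
    intro i
    have := (h2pos i).ne'
    field_simp
    ring
  have Lδ : Tendsto δ atTop (nhds (-1)) := by
    have := (L2.mul L1).neg
    rw [one_mul] at this
    apply this.congr
    intro i
    have h := (h2pos i).ne'
    simp only [hδ]
    field_simp
  have hC := Lδ.cesaro
  apply hC.congr
  intro m
  congr 1
  rw [hsum m]
  have hc : (0:ℝ) < θ + (m:ℝ)/2 := hpos _ (by positivity)
  have : ∑ j ∈ Icc 1 m, Real.log ((θ + ((j:ℝ) - 1)/2) / (θ + (m:ℝ)/2))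
      = ∑ j ∈ Icc 1 m, (Real.log (θ + ((j:ℝ) - 1)/2) - Real.log (θ + (m:ℝ)/2)) := by
    apply Finset.sum_congr rfl
    intro j hj
    have hj1 : 1 ≤ j := (Finset.mem_Icc.mp hj).1
    have hj' : (0:ℝ) < θ + ((j:ℝ)-1)/2 := by
      have : (1:ℝ) ≤ (j:ℝ) := by exact_mod_cast hj1
      linarith
    exact Real.log_div hj'.ne' hc.ne'
  rw [this, Finset.sum_sub_distrib, Finset.sum_const, Nat.card_Icc]
  have hre : ∑ j ∈ Icc 1 m, Real.log (θ + ((j:ℝ) - 1)/2)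
      = ∑ i ∈ range m, Real.log (θ + (i:ℝ)/2) := by
    rw [← Finset.Ico_add_one_right_eq_Icc, Finset.sum_Ico_eq_sum_range]
    apply Finset.sum_congr (by norm_num)
    intro i _
    push_cast
    ring_nf
  rw [hre]
  simp

open ProbabilityTheory in
lemma bound_lemma (η : ℝ) (hη : 1 < η)
    {Ω : Type*} [MeasurableSpace Ω] (P : Measure Ω) [IsProbabilityMeasure P]
    (Y : ℕ → ℕ → Ω → ℝ)
    (hindep : ∀ d : ℕ, 2 ≤ d →
      iIndepFun
        (fun j : {j : ℕ // 1 ≤ j ∧ j ≤ d - 1} => Y d j) P)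
    (hY : ∀ d j : ℕ, 2 ≤ d → 1 ≤ j → j ≤ d - 1 →
      Measurable (Y d j) ∧ Measure.map (Y d j) P =
        _root_.betaMeasure (η + ((j : ℝ) - 1) / 2) (((d : ℝ) - (j : ℝ)) / 2))
    (ε : ℝ) (hε : 0 < ε) (hεe : ε < Real.exp (-1)) (d : ℕ) (hd : 2 ≤ d) :
    P {ω | ε < |(∏ j ∈ Finset.Icc 1 (d - 1), Y d j ω) ^ ((d : ℝ)⁻¹) - Real.exp (-1)|} ≤
      ENNReal.ofReal ((∏ j ∈ Finset.Icc 1 (d-1),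
          ((η + ((j:ℝ)-1)/2) / (η + ((d:ℝ)-1)/2))) / (Real.exp (-1) + ε) ^ d)
      + ENNReal.ofReal ((∏ j ∈ Finset.Icc 1 (d-1),
          ((η - 1 + ((d:ℝ)-1)/2) / (η - 1 + ((j:ℝ)-1)/2))) * (Real.exp (-1) - ε) ^ d) := by
  have hd0 : d ≠ 0 := by omega
  set c1 := Real.exp (-1) + ε with hc1def
  set c2 := Real.exp (-1) - ε with hc2def
  have hc1 : 0 < c1 := by have := Real.exp_pos (-1); simp only [hc1def]; linarith
  have hc2 : 0 < c2 := by simp only [hc2def]; linarith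
  -- basic per-index facts
  have hjmem : ∀ j ∈ Finset.Icc 1 (d-1), 1 ≤ j ∧ j ≤ d - 1 := fun j hj => Finset.mem_Icc.mp hj
  have hmeasY : ∀ j ∈ Finset.Icc 1 (d-1), Measurable (Y d j) := fun j hj =>
    (hY d j hd (hjmem j hj).1 (hjmem j hj).2).1
  have hmapY : ∀ j ∈ Finset.Icc 1 (d-1), Measure.map (Y d j) P =
      _root_.betaMeasure (η + ((j : ℝ) - 1) / 2) (((d : ℝ) - (j : ℝ)) / 2) := fun j hj =>
    (hY d j hd (hjmem j hj).1 (hjmem j hj).2).2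
  have haj : ∀ j ∈ Finset.Icc 1 (d-1), 1 < η + ((j : ℝ) - 1) / 2 := by
    intro j hj
    have h1 : (1:ℝ) ≤ (j:ℝ) := by exact_mod_cast (hjmem j hj).1
    linarith
  have hbj : ∀ j ∈ Finset.Icc 1 (d-1), 0 < ((d : ℝ) - (j : ℝ)) / 2 := by
    intro j hj
    have h2 : j ≤ d - 1 := (hjmem j hj).2
    have h3 : j + 1 ≤ d := by omega
    have : (j:ℝ) + 1 ≤ (d:ℝ) := by exact_mod_cast h3
    linarith
  have habj : ∀ j ∈ Finset.Icc 1 (d-1),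
      (η + ((j : ℝ) - 1) / 2) + (((d : ℝ) - (j : ℝ)) / 2) = η + ((d:ℝ)-1)/2 := by
    intro j _; ring
  -- the product r.v.
  set D : Ω → ℝ := fun ω => ∏ j ∈ Finset.Icc 1 (d - 1), Y d j ω with hDdef
  have hDmeas : Measurable D := Finset.measurable_prod _ fun j hj => hmeasY j hj
  -- good set
  set G : Set Ω := {ω | ∀ j ∈ Finset.Icc 1 (d-1), Y d j ω ∈ Set.Ioo (0:ℝ) 1} with hGdef
  have hGc : P Gᶜ = 0 := by
    have hsub : Gᶜ ⊆ ⋃ j ∈ (Finset.Icc 1 (d-1) : Finset ℕ),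
        (Y d j) ⁻¹' (Set.Ioo (0:ℝ) 1)ᶜ := by
      intro ω hω
      simp only [hGdef, Set.mem_compl_iff, Set.mem_setOf_eq, not_forall] at hω
      obtain ⟨j, hj, hnot⟩ := hω
      exact Set.mem_biUnion hj hnot
    have hnull : ∀ j ∈ (Finset.Icc 1 (d-1) : Finset ℕ),
        P ((Y d j) ⁻¹' (Set.Ioo (0:ℝ) 1)ᶜ) = 0 := by
      intro j hj
      rw [← Measure.map_apply (hmeasY j hj) measurableSet_Ioo.compl, hmapY j hj]
      exact betaMeasure_compl_Ioo _ _
    refine measure_mono_null hsub ?_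
    exact (measure_biUnion_null_iff (Finset.Icc 1 (d-1) : Finset ℕ).countable_toSet).mpr hnull
  have hGae : ∀ᵐ ω ∂P, ω ∈ G := by
    rw [ae_iff]
    exact hGc
  -- tail sets
  set fA : Ω → ℝ≥0∞ := fun ω => ENNReal.ofReal (D ω) with hfAdef
  set fB : Ω → ℝ≥0∞ := fun ω => ENNReal.ofReal ((D ω)⁻¹) with hfBdef
  set A : Set Ω := {ω | ENNReal.ofReal (c1 ^ d) ≤ fA ω} with hAdef
  set B : Set Ω := {ω | ENNReal.ofReal ((c2 ^ d)⁻¹) ≤ fB ω} with hBdef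
  set E : Set Ω := {ω | ε < |D ω ^ ((d : ℝ)⁻¹) - Real.exp (-1)|} with hEdef
  have hEG : E ∩ G ⊆ A ∪ B := by
    rintro ω ⟨hE, hG⟩
    simp only [hEdef, Set.mem_setOf_eq] at hE
    have hDpos : 0 < D ω := Finset.prod_pos fun j hj => (hG j hj).1
    have hXnn : 0 ≤ D ω ^ ((d : ℝ)⁻¹) := Real.rpow_nonneg hDpos.le _
    have hpow : (D ω ^ ((d : ℝ)⁻¹)) ^ d = D ω := Real.rpow_inv_natCast_pow hDpos.le hd0
    rcases lt_abs.mp hE with h | h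
    · left
      have hlt : c1 < D ω ^ ((d : ℝ)⁻¹) := by simp only [hc1def]; linarith
      have : c1 ^ d < D ω := by
        rw [← hpow]
        exact pow_lt_pow_left₀ hlt hc1.le hd0
      exact ENNReal.ofReal_le_ofReal this.le
    · right
      have hlt : D ω ^ ((d : ℝ)⁻¹) < c2 := by simp only [hc2def]; linarith
      have h1 : D ω < c2 ^ d := by
        rw [← hpow]
        exact pow_lt_pow_left₀ hlt hXnn hd0
      have h2 : (c2 ^ d)⁻¹ < (D ω)⁻¹ := by
        apply inv_strictAnti₀ hDpos h1
      exact ENNReal.ofReal_le_ofReal h2.le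
  -- reduction
  have hPE : P E ≤ P A + P B := by
    calc P E ≤ P ((E ∩ G) ∪ Gᶜ) := measure_mono (fun ω hω => by
          by_cases hg : ω ∈ G
          · exact Or.inl ⟨hω, hg⟩
          · exact Or.inr hg)
      _ ≤ P (E ∩ G) + P Gᶜ := measure_union_le _ _
      _ = P (E ∩ G) := by rw [hGc, add_zero]
      _ ≤ P (A ∪ B) := measure_mono hEG
      _ ≤ P A + P B := measure_union_le _ _
  -- index transfer gadget
  have prodtrans : ∀ F : ℕ → ℝ≥0∞,
      ∃ s : Finset {j : ℕ // 1 ≤ j ∧ j ≤ d - 1},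
        (∀ g : ℕ → ℝ≥0∞, ∏ i ∈ s, g i.1 = ∏ j ∈ Finset.Icc 1 (d-1), g j) := by
    intro F
    refine ⟨(Finset.Icc 1 (d-1)).attach.map
      ⟨fun x => ⟨x.1, Finset.mem_Icc.mp x.2⟩, ?_⟩, ?_⟩
    · intro x y hxy
      simp only [Subtype.mk.injEq] at hxy
      exact Subtype.ext hxy
    · intro g
      rw [Finset.prod_map]
      exact Finset.prod_attach _ _
  obtain ⟨s, hs⟩ := prodtrans 0
  -- Markov for A
  have hintA : ∫⁻ ω, fA ω ∂P = ENNReal.ofReal (∏ j ∈ Finset.Icc 1 (d-1),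
      ((η + ((j:ℝ)-1)/2) / (η + ((d:ℝ)-1)/2))) := by
    have step1 : ∫⁻ ω, fA ω ∂P =
        ∫⁻ ω, ∏ j ∈ Finset.Icc 1 (d-1), ENNReal.ofReal (Y d j ω) ∂P := by
      apply lintegral_congr_ae
      filter_upwards [hGae] with ω hω
      exact ENNReal.ofReal_prod_of_nonneg fun j hj => (hω j hj).1.le
    have hind : iIndepFun
        (fun i : {j : ℕ // 1 ≤ j ∧ j ≤ d - 1} => fun ω => ENNReal.ofReal (Y d i.1 ω)) P :=
      (hindep d hd).comp (fun _ => ENNReal.ofReal) (fun _ => ENNReal.measurable_ofReal)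
    have hmeas' : ∀ i : {j : ℕ // 1 ≤ j ∧ j ≤ d - 1},
        Measurable fun ω => ENNReal.ofReal (Y d i.1 ω) := by
      intro i
      exact (hY d i.1 hd i.2.1 i.2.2).1.ennreal_ofReal
    have step2 := lintegral_prod_of_indep _ hind hmeas' s
    have e1 : ∀ ω, ∏ i ∈ s, ENNReal.ofReal (Y d i.1 ω) =
        ∏ j ∈ Finset.Icc 1 (d-1), ENNReal.ofReal (Y d j ω) := fun ω =>
      hs (fun j => ENNReal.ofReal (Y d j ω))
    have step3 : ∀ j ∈ Finset.Icc 1 (d-1), ∫⁻ ω, ENNReal.ofReal (Y d j ω) ∂P =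
        ENNReal.ofReal ((η + ((j:ℝ)-1)/2) / (η + ((d:ℝ)-1)/2)) := by
      intro j hj
      rw [← lintegral_map ENNReal.measurable_ofReal (hmeasY j hj), hmapY j hj,
        betaMeasure_lintegral_id (by linarith [haj j hj]) (hbj j hj)]
      rw [habj j hj]
    calc ∫⁻ ω, fA ω ∂P = ∫⁻ ω, ∏ i ∈ s, ENNReal.ofReal (Y d i.1 ω) ∂P := by
          rw [step1]; exact lintegral_congr fun ω => (e1 ω).symm
      _ = ∏ i ∈ s, ∫⁻ ω, ENNReal.ofReal (Y d i.1 ω) ∂P := step2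
      _ = ∏ j ∈ Finset.Icc 1 (d-1), ∫⁻ ω, ENNReal.ofReal (Y d j ω) ∂P :=
          hs (fun j => ∫⁻ ω, ENNReal.ofReal (Y d j ω) ∂P)
      _ = ∏ j ∈ Finset.Icc 1 (d-1),
            ENNReal.ofReal ((η + ((j:ℝ)-1)/2) / (η + ((d:ℝ)-1)/2)) :=
          Finset.prod_congr rfl step3
      _ = ENNReal.ofReal (∏ j ∈ Finset.Icc 1 (d-1),
            ((η + ((j:ℝ)-1)/2) / (η + ((d:ℝ)-1)/2))) := by
          rw [ENNReal.ofReal_prod_of_nonneg]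
          intro j hj
          have h1 := haj j hj
          have : (0:ℝ) < η + ((d:ℝ)-1)/2 := by
            have : (2:ℝ) ≤ (d:ℝ) := by exact_mod_cast hd
            linarith
          positivity
  have hPA : P A ≤ ENNReal.ofReal ((∏ j ∈ Finset.Icc 1 (d-1),
      ((η + ((j:ℝ)-1)/2) / (η + ((d:ℝ)-1)/2))) / c1 ^ d) := by
    have hm : AEMeasurable fA P := (hDmeas.ennreal_ofReal).aemeasurable
    have ht0 : ENNReal.ofReal (c1 ^ d) ≠ 0 := by
      simp only [ne_eq, ENNReal.ofReal_eq_zero, not_le]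
      positivity
    have := meas_ge_le_lintegral_div hm ht0 ENNReal.ofReal_ne_top
    rw [hintA] at this
    refine le_trans this ?_
    rw [ENNReal.ofReal_div_of_pos (by positivity)]
  -- Markov for B
  have hintB : ∫⁻ ω, fB ω ∂P = ENNReal.ofReal (∏ j ∈ Finset.Icc 1 (d-1),
      ((η - 1 + ((d:ℝ)-1)/2) / (η - 1 + ((j:ℝ)-1)/2))) := by
    have step1 : ∫⁻ ω, fB ω ∂P =
        ∫⁻ ω, ∏ j ∈ Finset.Icc 1 (d-1), ENNReal.ofReal ((Y d j ω)⁻¹) ∂P := by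
      apply lintegral_congr_ae
      filter_upwards [hGae] with ω hω
      simp only [hfBdef, hDdef]
      rw [← Finset.prod_inv_distrib]
      exact ENNReal.ofReal_prod_of_nonneg fun j hj => inv_nonneg.mpr (hω j hj).1.le
    have hind : iIndepFun
        (fun i : {j : ℕ // 1 ≤ j ∧ j ≤ d - 1} => fun ω => ENNReal.ofReal ((Y d i.1 ω)⁻¹)) P :=
      (hindep d hd).comp (fun _ => fun x : ℝ => ENNReal.ofReal x⁻¹)
        (fun _ => measurable_inv.ennreal_ofReal)
    have hmeas' : ∀ i : {j : ℕ // 1 ≤ j ∧ j ≤ d - 1},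
        Measurable fun ω => ENNReal.ofReal ((Y d i.1 ω)⁻¹) := by
      intro i
      exact ((hY d i.1 hd i.2.1 i.2.2).1.inv).ennreal_ofReal
    have step2 := lintegral_prod_of_indep _ hind hmeas' s
    have step3 : ∀ j ∈ Finset.Icc 1 (d-1), ∫⁻ ω, ENNReal.ofReal ((Y d j ω)⁻¹) ∂P =
        ENNReal.ofReal ((η - 1 + ((d:ℝ)-1)/2) / (η - 1 + ((j:ℝ)-1)/2)) := by
      intro j hj
      have hminv : Measurable fun x : ℝ => ENNReal.ofReal x⁻¹ :=
        measurable_inv.ennreal_ofReal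
      rw [← lintegral_map hminv (hmeasY j hj), hmapY j hj,
        betaMeasure_lintegral_inv (haj j hj) (hbj j hj)]
      congr 1
      rw [habj j hj]
      ring_nf
    calc ∫⁻ ω, fB ω ∂P = ∫⁻ ω, ∏ i ∈ s, ENNReal.ofReal ((Y d i.1 ω)⁻¹) ∂P := by
          rw [step1]; exact lintegral_congr fun ω =>
            (hs (fun j => ENNReal.ofReal ((Y d j ω)⁻¹))).symm
      _ = ∏ i ∈ s, ∫⁻ ω, ENNReal.ofReal ((Y d i.1 ω)⁻¹) ∂P := step2
      _ = ∏ j ∈ Finset.Icc 1 (d-1), ∫⁻ ω, ENNReal.ofReal ((Y d j ω)⁻¹) ∂P :=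
          hs (fun j => ∫⁻ ω, ENNReal.ofReal ((Y d j ω)⁻¹) ∂P)
      _ = ∏ j ∈ Finset.Icc 1 (d-1),
            ENNReal.ofReal ((η - 1 + ((d:ℝ)-1)/2) / (η - 1 + ((j:ℝ)-1)/2)) :=
          Finset.prod_congr rfl step3
      _ = ENNReal.ofReal (∏ j ∈ Finset.Icc 1 (d-1),
            ((η - 1 + ((d:ℝ)-1)/2) / (η - 1 + ((j:ℝ)-1)/2))) := by
          rw [ENNReal.ofReal_prod_of_nonneg]
          intro j hj
          have h1 := haj j hj
          have : (2:ℝ) ≤ (d:ℝ) := by exact_mod_cast hd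
          have h2 : (0:ℝ) < η - 1 + ((d:ℝ)-1)/2 := by linarith
          have h3 : (0:ℝ) < η - 1 + ((j:ℝ)-1)/2 := by linarith
          positivity
  have hPB : P B ≤ ENNReal.ofReal ((∏ j ∈ Finset.Icc 1 (d-1),
      ((η - 1 + ((d:ℝ)-1)/2) / (η - 1 + ((j:ℝ)-1)/2))) * c2 ^ d) := by
    have hm : AEMeasurable fB P := ((hDmeas.inv).ennreal_ofReal).aemeasurable
    have ht0 : ENNReal.ofReal ((c2 ^ d)⁻¹) ≠ 0 := by
      simp only [ne_eq, ENNReal.ofReal_eq_zero, not_le]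
      positivity
    have := meas_ge_le_lintegral_div hm ht0 ENNReal.ofReal_ne_top
    rw [hintB] at this
    refine le_trans this ?_
    rw [ENNReal.ofReal_inv_of_pos (by positivity), div_eq_mul_inv, inv_inv,
      ← ENNReal.ofReal_mul]
    apply Finset.prod_nonneg
    intro j hj
    have h1 := haj j hj
    have : (2:ℝ) ≤ (d:ℝ) := by exact_mod_cast hd
    have h2 : (0:ℝ) < η - 1 + ((d:ℝ)-1)/2 := by linarith
    have h3 : (0:ℝ) < η - 1 + ((j:ℝ)-1)/2 := by linarith
    positivity
  exact le_trans hPE (add_le_add hPA hPB)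

theorem stmt6 (η : ℝ) (hη : 1 < η)
    {Ω : Type*} [MeasurableSpace Ω] (P : Measure Ω) [IsProbabilityMeasure P]
    (Y : ℕ → ℕ → Ω → ℝ)
    (hindep : ∀ d : ℕ, 2 ≤ d →
      iIndepFun
        (fun j : {j : ℕ // 1 ≤ j ∧ j ≤ d - 1} => Y d j) P)
    (hY : ∀ d j : ℕ, 2 ≤ d → 1 ≤ j → j ≤ d - 1 →
      HasBetaDist P (Y d j) (η + ((j : ℝ) - 1) / 2) (((d : ℝ) - (j : ℝ)) / 2)) :
    ∀ ε : ℝ, 0 < ε →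
      Tendsto (fun d : ℕ =>
          P {ω | ε < |(∏ j ∈ Finset.Icc 1 (d - 1), Y d j ω) ^ ((d : ℝ)⁻¹) - Real.exp (-1)|})
        atTop (nhds 0) := by
  have hη0 : (0:ℝ) < η := by linarith
  have hη1 : (0:ℝ) < η - 1 := by linarith
  -- the generic sum limit
  have hS : ∀ θ : ℝ, 0 < θ → Tendsto (fun d : ℕ => (d:ℝ)⁻¹ *
      ∑ j ∈ Finset.Icc 1 (d-1), Real.log ((θ + ((j:ℝ)-1)/2) / (θ + ((d:ℝ)-1)/2)))
      atTop (nhds (-1)) := by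
    intro θ hθ
    have K' := (key_log_limit hθ).comp (tendsto_sub_atTop_nat 1)
    have R : Tendsto (fun d : ℕ => ((d:ℝ) - 1) / (d:ℝ)) atTop (nhds 1) := by
      have h0 : Tendsto (fun d : ℕ => 1 - (d:ℝ)⁻¹) atTop (nhds (1 - 0)) :=
        tendsto_const_nhds.sub (tendsto_inv_atTop_zero.comp tendsto_natCast_atTop_atTop)
      rw [sub_zero] at h0
      apply h0.congr'
      filter_upwards [eventually_ge_atTop 1] with d hd1
      have hd0 : (d:ℝ) ≠ 0 := by
        have : (1:ℝ) ≤ (d:ℝ) := by exact_mod_cast hd1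
        linarith
      field_simp
    have hmul := R.mul K'
    rw [one_mul] at hmul
    apply hmul.congr'
    filter_upwards [eventually_ge_atTop 2] with d hd2
    have hd1 : 1 ≤ d := by omega
    have hcast : ((d - 1 : ℕ):ℝ) = (d:ℝ) - 1 := by
      push_cast [Nat.cast_sub hd1]
      ring
    have hd0 : (d:ℝ) ≠ 0 := by
      have : (2:ℝ) ≤ (d:ℝ) := by exact_mod_cast hd2
      linarith
    have hdm1 : (d:ℝ) - 1 ≠ 0 := by
      have : (2:ℝ) ≤ (d:ℝ) := by exact_mod_cast hd2
      linarith
    simp only [Function.comp_apply, hcast]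
    field_simp
  -- main statement for small ε
  have main : ∀ ε : ℝ, 0 < ε → ε < Real.exp (-1) →
      Tendsto (fun d : ℕ =>
          P {ω | ε < |(∏ j ∈ Finset.Icc 1 (d - 1), Y d j ω) ^ ((d : ℝ)⁻¹) - Real.exp (-1)|})
        atTop (nhds 0) := by
    intro ε hε hεe
    set c1 := Real.exp (-1) + ε with hc1def
    set c2 := Real.exp (-1) - ε with hc2def
    have hexp := Real.exp_pos (-1)
    have hc1 : 0 < c1 := by simp only [hc1def]; linarith
    have hc2 : 0 < c2 := by simp only [hc2def]; linarith
    have hlc1 : -1 < Real.log c1 := by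
      have := Real.log_lt_log hexp (show Real.exp (-1) < c1 by simp only [hc1def]; linarith)
      rwa [Real.log_exp] at this
    have hlc2 : Real.log c2 < -1 := by
      have := Real.log_lt_log hc2 (show c2 < Real.exp (-1) by simp only [hc2def]; linarith)
      rwa [Real.log_exp] at this
    set u : ℕ → ℝ := fun d => (∏ j ∈ Finset.Icc 1 (d-1),
        ((η + ((j:ℝ)-1)/2) / (η + ((d:ℝ)-1)/2))) / c1 ^ d with hudef
    set v : ℕ → ℝ := fun d => (∏ j ∈ Finset.Icc 1 (d-1),
        ((η - 1 + ((d:ℝ)-1)/2) / (η - 1 + ((j:ℝ)-1)/2))) * c2 ^ d with hvdef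
    -- limits
    have Tu : Tendsto u atTop (nhds 0) := by
      have hB := (hS η hη0).sub_const (Real.log c1)
      have hw := Tendsto.atTop_mul_neg (show -1 - Real.log c1 < 0 by linarith)
        tendsto_natCast_atTop_atTop hB
      have hexp0 : Tendsto (fun d : ℕ => Real.exp ((d:ℝ) *
          ((d:ℝ)⁻¹ * (∑ j ∈ Finset.Icc 1 (d-1),
            Real.log ((η + ((j:ℝ)-1)/2) / (η + ((d:ℝ)-1)/2))) - Real.log c1)))
          atTop (nhds 0) := Real.tendsto_exp_atBot.comp hw
      apply hexp0.congr'
      filter_upwards [eventually_ge_atTop 2] with d hd2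
      have hd0 : (d:ℝ) ≠ 0 := by
        have : (2:ℝ) ≤ (d:ℝ) := by exact_mod_cast hd2
        linarith
      have hdenpos : (0:ℝ) < η + ((d:ℝ)-1)/2 := by
        have : (2:ℝ) ≤ (d:ℝ) := by exact_mod_cast hd2
        linarith
      have hrpos : ∀ j ∈ Finset.Icc 1 (d-1), (0:ℝ) <
          (η + ((j:ℝ)-1)/2) / (η + ((d:ℝ)-1)/2) := by
        intro j hj
        have h1 : 1 ≤ j := (Finset.mem_Icc.mp hj).1
        have : (1:ℝ) ≤ (j:ℝ) := by exact_mod_cast h1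
        have hnum : (0:ℝ) < η + ((j:ℝ)-1)/2 := by linarith
        positivity
      have e1 : (d:ℝ) * ((d:ℝ)⁻¹ * (∑ j ∈ Finset.Icc 1 (d-1),
          Real.log ((η + ((j:ℝ)-1)/2) / (η + ((d:ℝ)-1)/2))) - Real.log c1)
          = (∑ j ∈ Finset.Icc 1 (d-1),
            Real.log ((η + ((j:ℝ)-1)/2) / (η + ((d:ℝ)-1)/2))) - (d:ℝ) * Real.log c1 := by
        field_simp
      rw [e1, Real.exp_sub, Real.exp_sum]
      have e2 : ∀ j ∈ Finset.Icc 1 (d-1),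
          Real.exp (Real.log ((η + ((j:ℝ)-1)/2) / (η + ((d:ℝ)-1)/2)))
          = (η + ((j:ℝ)-1)/2) / (η + ((d:ℝ)-1)/2) := fun j hj => Real.exp_log (hrpos j hj)
      rw [Finset.prod_congr rfl e2]
      have e3 : Real.exp ((d:ℝ) * Real.log c1) = c1 ^ d := by
        rw [← Real.exp_log hc1, ← Real.exp_nat_mul, Real.log_exp]
      rw [e3]
    have Tv : Tendsto v atTop (nhds 0) := by
      have hB : Tendsto (fun d : ℕ => -((d:ℝ)⁻¹ * (∑ j ∈ Finset.Icc 1 (d-1),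
          Real.log ((η - 1 + ((j:ℝ)-1)/2) / (η - 1 + ((d:ℝ)-1)/2)))) + Real.log c2)
          atTop (nhds (1 + Real.log c2)) := by
        have := ((hS (η - 1) hη1).neg).add_const (Real.log c2)
        simpa using this
      have hw := Tendsto.atTop_mul_neg (show 1 + Real.log c2 < 0 by linarith)
        tendsto_natCast_atTop_atTop hB
      have hexp0 := Real.tendsto_exp_atBot.comp hw
      apply hexp0.congr'
      filter_upwards [eventually_ge_atTop 2] with d hd2
      have hd0 : (d:ℝ) ≠ 0 := by
        have : (2:ℝ) ≤ (d:ℝ) := by exact_mod_cast hd2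
        linarith
      have hdenpos : (0:ℝ) < η - 1 + ((d:ℝ)-1)/2 := by
        have : (2:ℝ) ≤ (d:ℝ) := by exact_mod_cast hd2
        linarith
      have hrpos : ∀ j ∈ Finset.Icc 1 (d-1), (0:ℝ) <
          (η - 1 + ((j:ℝ)-1)/2) / (η - 1 + ((d:ℝ)-1)/2) := by
        intro j hj
        have h1 : 1 ≤ j := (Finset.mem_Icc.mp hj).1
        have : (1:ℝ) ≤ (j:ℝ) := by exact_mod_cast h1
        have hnum : (0:ℝ) < η - 1 + ((j:ℝ)-1)/2 := by linarith
        positivity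
      have e1 : (d:ℝ) * (-((d:ℝ)⁻¹ * (∑ j ∈ Finset.Icc 1 (d-1),
          Real.log ((η - 1 + ((j:ℝ)-1)/2) / (η - 1 + ((d:ℝ)-1)/2)))) + Real.log c2)
          = (d:ℝ) * Real.log c2 - (∑ j ∈ Finset.Icc 1 (d-1),
            Real.log ((η - 1 + ((j:ℝ)-1)/2) / (η - 1 + ((d:ℝ)-1)/2))) := by
        field_simp
        ring
      dsimp only [Function.comp_apply]
      rw [e1, Real.exp_sub, Real.exp_sum]
      have e2 : ∀ j ∈ Finset.Icc 1 (d-1),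
          Real.exp (Real.log ((η - 1 + ((j:ℝ)-1)/2) / (η - 1 + ((d:ℝ)-1)/2)))
          = (η - 1 + ((j:ℝ)-1)/2) / (η - 1 + ((d:ℝ)-1)/2) := fun j hj =>
        Real.exp_log (hrpos j hj)
      rw [Finset.prod_congr rfl e2]
      have e3 : Real.exp ((d:ℝ) * Real.log c2) = c2 ^ d := by
        rw [← Real.exp_log hc2, ← Real.exp_nat_mul, Real.log_exp]
      rw [e3]
      have eprod : (∏ j ∈ Finset.Icc 1 (d-1), ((η - 1 + ((d:ℝ)-1)/2) / (η - 1 + ((j:ℝ)-1)/2)))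
          = (∏ j ∈ Finset.Icc 1 (d-1), ((η - 1 + ((j:ℝ)-1)/2) / (η - 1 + ((d:ℝ)-1)/2)))⁻¹ := by
        rw [← Finset.prod_inv_distrib]
        apply Finset.prod_congr rfl
        intro j hj
        rw [inv_div]
      simp only [hvdef]
      rw [eprod, div_eq_mul_inv, mul_comm]
    -- the bound
    have hbd : ∀ᶠ d in atTop,
        P {ω | ε < |(∏ j ∈ Finset.Icc 1 (d - 1), Y d j ω) ^ ((d : ℝ)⁻¹) - Real.exp (-1)|}
          ≤ ENNReal.ofReal (u d) + ENNReal.ofReal (v d) := by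
      filter_upwards [eventually_ge_atTop 2] with d hd2
      exact bound_lemma η hη P Y hindep (fun d j a b c => ⟨(hY d j a b c).1, (hY d j a b c).2⟩) ε hε hεe d hd2
    have hlim : Tendsto (fun d : ℕ => ENNReal.ofReal (u d) + ENNReal.ofReal (v d))
        atTop (nhds 0) := by
      have h1 := ENNReal.tendsto_ofReal Tu
      have h2 := ENNReal.tendsto_ofReal Tv
      rw [ENNReal.ofReal_zero] at h1 h2
      simpa using h1.add h2
    exact tendsto_of_tendsto_of_tendsto_of_le_of_le' tendsto_const_nhds hlim
      (Eventually.of_forall fun d => zero_le) hbd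
  -- reduction to small ε
  intro ε hε
  set ε' := min ε (Real.exp (-1) / 2) with hε'def
  have hexp := Real.exp_pos (-1)
  have hε'0 : 0 < ε' := lt_min hε (by linarith)
  have hε'e : ε' < Real.exp (-1) := lt_of_le_of_lt (min_le_right _ _) (by linarith)
  have hm := main ε' hε'0 hε'e
  apply tendsto_of_tendsto_of_tendsto_of_le_of_le' tendsto_const_nhds hm
    (Eventually.of_forall fun d => zero_le)
  apply Eventually.of_forall
  intro d
  apply measure_mono
  intro ω hω
  simp only [Set.mem_setOf_eq] at hω ⊢
  exact lt_of_le_of_lt (min_le_left _ _) hω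
end

section
/- The d-th root of the variance of D_d converges to 1/e²: lim_{d→∞} (Var(D_d))^{1/d} = 1/e². -/
open MeasureTheory ProbabilityTheory Real Filter Finset

open scoped ENNReal NNReal Topology

noncomputable def betaDens (a b : ℝ) (x : ℝ) : ℝ :=
  if x ∈ Set.Ioo (0 : ℝ) 1 then
    x ^ (a - 1) * (1 - x) ^ (b - 1) / (Real.Gamma a * Real.Gamma b / Real.Gamma (a + b))
  else 0

lemma betaDens_meas (a b : ℝ) : Measurable (betaDens a b) := by
  unfold betaDens
  exact Measurable.ite measurableSet_Ioo
    (by fun_prop) measurable_const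

lemma betaDens_nonneg {a b : ℝ} (ha : 0 < a) (hb : 0 < b) (x : ℝ) : 0 ≤ betaDens a b x := by
  unfold betaDens
  split
  · apply div_nonneg
    · exact mul_nonneg (Real.rpow_nonneg (by rename_i h; exact h.1.le) _)
        (Real.rpow_nonneg (by rename_i h; linarith [h.2]) _)
    · positivity
  · exact le_refl _

lemma betaIntegral_real {a b : ℝ} (ha : 0 < a) (hb : 0 < b) :
    ∫ x in (0:ℝ)..1, x ^ (a-1) * (1-x) ^ (b-1) =
      Real.Gamma a * Real.Gamma b / Real.Gamma (a+b) := by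
  have key := Complex.Gamma_mul_Gamma_eq_betaIntegral (s := (a:ℂ)) (t := (b:ℂ))
    (by simpa using ha) (by simpa using hb)
  have hbi : Complex.betaIntegral (a:ℂ) (b:ℂ)
      = ((∫ x in (0:ℝ)..1, x ^ (a-1) * (1-x) ^ (b-1) : ℝ) : ℂ) := by
    rw [Complex.betaIntegral, ← intervalIntegral.integral_ofReal]
    apply intervalIntegral.integral_congr
    intro x hx
    rw [Set.uIcc_of_le (zero_le_one' ℝ)] at hx
    simp only
    rw [Complex.ofReal_mul, Complex.ofReal_cpow hx.1 (a-1),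
      Complex.ofReal_cpow (by linarith [hx.2] : (0:ℝ) ≤ 1 - x) (b-1)]
    push_cast
    ring
  rw [hbi, ← Complex.ofReal_add, Complex.Gamma_ofReal, Complex.Gamma_ofReal,
    Complex.Gamma_ofReal, ← Complex.ofReal_mul, ← Complex.ofReal_mul] at key
  have := Complex.ofReal_injective key
  have hG : Real.Gamma (a+b) ≠ 0 := (Real.Gamma_pos_of_pos (by linarith)).ne'
  field_simp
  linarith [this]

lemma beta_moment {Ω : Type*} [MeasurableSpace Ω] {P : Measure Ω} [IsProbabilityMeasure P]
    {X : Ω → ℝ} {a b : ℝ} (ha : 0 < a) (hb : 0 < b) (h : HasBetaDist P X a b) (n : ℕ) :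
    ∫ ω, X ω ^ n ∂P = Real.Gamma (a + n) * Real.Gamma (a + b) /
      (Real.Gamma a * Real.Gamma (a + b + n)) := by
  have hBc : (0:ℝ) < Real.Gamma a * Real.Gamma b / Real.Gamma (a + b) := by
    have := Real.Gamma_pos_of_pos ha
    have := Real.Gamma_pos_of_pos hb
    have := Real.Gamma_pos_of_pos (by linarith : (0:ℝ) < a + b)
    positivity
  have h1 : ∫ ω, X ω ^ n ∂P = ∫ x, x ^ n ∂(_root_.betaMeasure a b) := by
    have hms : Measurable fun y : ℝ => y ^ n := by measurability
    rw [← h.2]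
    exact (integral_map h.1.aemeasurable hms.aestronglyMeasurable).symm
  have hbm : _root_.betaMeasure a b
      = volume.withDensity (fun x => ((betaDens a b x).toNNReal : ℝ≥0∞)) := rfl
  have h2 : ∫ x, x ^ n ∂(_root_.betaMeasure a b)
      = ∫ x, ((betaDens a b x).toNNReal : ℝ) • x ^ n := by
    rw [hbm]
    exact integral_withDensity_eq_integral_smul (betaDens_meas a b).real_toNNReal _
  have h3 : (fun x => ((betaDens a b x).toNNReal : ℝ) • x ^ n)
      = Set.indicator (Set.Ioo (0:ℝ) 1)
        (fun x => (x ^ (a + (n:ℝ) - 1) * (1-x) ^ (b-1)) *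
          (Real.Gamma a * Real.Gamma b / Real.Gamma (a + b))⁻¹) := by
    funext x
    by_cases hx : x ∈ Set.Ioo (0:ℝ) 1
    · rw [Set.indicator_of_mem hx, Real.coe_toNNReal _ (betaDens_nonneg ha hb x)]
      unfold betaDens
      rw [if_pos hx, smul_eq_mul]
      have hxp : (0:ℝ) < x := hx.1
      rw [show (x:ℝ) ^ n = x ^ (n:ℝ) from (Real.rpow_natCast x n).symm,
        show a + (n:ℝ) - 1 = (a - 1) + n by ring, Real.rpow_add hxp]
      field_simp
    · rw [Set.indicator_of_notMem hx]
      unfold betaDens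
      rw [if_neg hx]
      simp
  have h4 : ∫ x, ((betaDens a b x).toNNReal : ℝ) • x ^ n
      = (∫ x in Set.Ioo (0:ℝ) 1, x ^ (a + (n:ℝ) - 1) * (1-x) ^ (b-1)) *
        (Real.Gamma a * Real.Gamma b / Real.Gamma (a + b))⁻¹ := by
    rw [h3, integral_indicator measurableSet_Ioo, integral_mul_const]
  have h5 : ∫ x in Set.Ioo (0:ℝ) 1, x ^ (a + (n:ℝ) - 1) * (1-x) ^ (b-1)
      = Real.Gamma (a + n) * Real.Gamma b / Real.Gamma (a + n + b) := by
    rw [← integral_Ioc_eq_integral_Ioo, ← intervalIntegral.integral_of_le zero_le_one]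
    exact betaIntegral_real (by positivity) hb
  rw [h1, h2, h4, h5]
  have g1 := Real.Gamma_pos_of_pos ha
  have g2 := Real.Gamma_pos_of_pos hb
  have g3 := Real.Gamma_pos_of_pos (show (0:ℝ) < a + b by linarith)
  have g4 := Real.Gamma_pos_of_pos (show (0:ℝ) < a + n + b by positivity)
  rw [show a + b + (n:ℝ) = a + n + b by ring]
  field_simp

lemma beta_mean {Ω : Type*} [MeasurableSpace Ω] {P : Measure Ω} [IsProbabilityMeasure P]
    {X : Ω → ℝ} {a b : ℝ} (ha : 0 < a) (hb : 0 < b) (h : HasBetaDist P X a b) :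
    ∫ ω, X ω ∂P = a / (a + b) := by
  have := beta_moment ha hb h 1
  simp only [pow_one, Nat.cast_one] at this
  rw [this, Real.Gamma_add_one ha.ne', Real.Gamma_add_one (by linarith : a + b ≠ 0)]
  have g1 := Real.Gamma_pos_of_pos ha
  have g3 := Real.Gamma_pos_of_pos (show (0:ℝ) < a + b by linarith)
  field_simp

lemma beta_sq {Ω : Type*} [MeasurableSpace Ω] {P : Measure Ω} [IsProbabilityMeasure P]
    {X : Ω → ℝ} {a b : ℝ} (ha : 0 < a) (hb : 0 < b) (h : HasBetaDist P X a b) :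
    ∫ ω, X ω ^ 2 ∂P = a * (a + 1) / ((a + b) * (a + b + 1)) := by
  have := beta_moment ha hb h 2
  simp only [Nat.cast_ofNat] at this
  rw [this, show a + (2:ℝ) = (a + 1) + 1 by ring,
    show a + b + (2:ℝ) = ((a + b) + 1) + 1 by ring,
    Real.Gamma_add_one (by linarith : a + 1 ≠ 0),
    Real.Gamma_add_one (by linarith : a + b + 1 ≠ 0),
    Real.Gamma_add_one ha.ne', Real.Gamma_add_one (by linarith : a + b ≠ 0)]
  have g1 := Real.Gamma_pos_of_pos ha
  have g3 := Real.Gamma_pos_of_pos (show (0:ℝ) < a + b by linarith)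
  field_simp

lemma beta_range {Ω : Type*} [MeasurableSpace Ω] {P : Measure Ω} [IsProbabilityMeasure P]
    {X : Ω → ℝ} {a b : ℝ} (h : HasBetaDist P X a b) :
    ∀ᵐ ω ∂P, X ω ∈ Set.Ioo (0:ℝ) 1 := by
  have hmeas : MeasurableSet (Set.Ioo (0:ℝ) 1) := measurableSet_Ioo
  have : P (X ⁻¹' (Set.Ioo (0:ℝ) 1)ᶜ) = 0 := by
    rw [← Measure.map_apply h.1 hmeas.compl, h.2]
    unfold _root_.betaMeasure
    rw [withDensity_apply _ hmeas.compl]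
    rw [setLIntegral_congr_fun_ae hmeas.compl
      (Filter.Eventually.of_forall (fun x hx => by
        simp only [Set.mem_compl_iff] at hx
        rw [if_neg hx, ENNReal.ofReal_zero])), lintegral_zero]
  rw [ae_iff]
  convert this using 2
  rfl


lemma indep_integral_prod {ι : Type*} {Ω : Type*} [MeasurableSpace Ω] {μ : Measure Ω}
    [IsProbabilityMeasure μ] {f : ι → Ω → ℝ}
    (hindep : iIndepFun f μ) (hmeas : ∀ i, Measurable (f i))
    (s : Finset ι) :
    ∫ ω, ∏ i ∈ s, f i ω ∂μ = ∏ i ∈ s, ∫ ω, f i ω ∂μ := by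
  classical
  induction s using Finset.induction with
  | empty => simp
  | insert i s hi ih =>
    rw [Finset.prod_insert hi, ← ih]
    have hip := (hindep.indepFun_finset_prod_of_notMem hmeas hi).symm
    have key := hip.integral_mul_eq_mul_integral (hmeas i).aestronglyMeasurable
      (by
        have : Measurable (∏ j ∈ s, f j) := by
          rw [show (∏ j ∈ s, f j) = fun ω => ∏ j ∈ s, f j ω from by funext ω; simp [Finset.prod_apply]]
          exact s.measurable_prod (fun j _ => hmeas j)
        exact this.aestronglyMeasurable)
    have e1 : ∫ ω, ∏ j ∈ insert i s, f j ω ∂μ = integral μ (f i * ∏ j ∈ s, f j) := by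
      congr 1
      funext ω
      simp [Finset.prod_insert hi, Finset.prod_apply]
    have e2 : integral μ (∏ j ∈ s, f j) = ∫ ω, ∏ j ∈ s, f j ω ∂μ := by
      congr 1
      funext ω
      simp [Finset.prod_apply]
    rw [e1, key, e2]

def sd (d : ℕ) : Finset {j : ℕ // 1 ≤ j ∧ j ≤ d - 1} :=
  (Finset.Icc 1 (d-1)).attach.map
    ⟨fun x => ⟨x.1, Finset.mem_Icc.1 x.2⟩,
     fun x y h => Subtype.ext (by simpa using congrArg Subtype.val h)⟩

lemma prod_sd {M : Type*} [CommMonoid M] (d : ℕ) (g : ℕ → M) :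
    ∏ i ∈ sd d, g i.1 = ∏ j ∈ Finset.Icc 1 (d-1), g j := by
  rw [sd, Finset.prod_map]
  exact Finset.prod_attach _ _

lemma var_formula {Ω : Type*} [MeasurableSpace Ω] (P : Measure Ω) [IsProbabilityMeasure P]
    (X : ℕ → ℕ → Ω → ℝ)
    (hindep : ∀ d : ℕ, 2 ≤ d →
      iIndepFun
        (fun j : {j : ℕ // 1 ≤ j ∧ j ≤ d - 1} => X d j) P)
    (hX : ∀ d j : ℕ, 2 ≤ d → 1 ≤ j → j ≤ d - 1 →
      HasBetaDist P (X d j) (((j : ℝ) + 1) / 2) (((d : ℝ) - (j : ℝ)) / 2))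
    {d : ℕ} (hd : 2 ≤ d) :
    variance (fun ω => ∏ j ∈ Finset.Icc 1 (d - 1), X d j ω) P =
      (∏ j ∈ Finset.Icc 1 (d-1), ((j:ℝ)+1)*((j:ℝ)+3)/(((d:ℝ)+1)*((d:ℝ)+3)))
      - (∏ j ∈ Finset.Icc 1 (d-1), ((j:ℝ)+1)/((d:ℝ)+1))^2 := by
  have hja : ∀ j ∈ Finset.Icc 1 (d-1), (0:ℝ) < ((j:ℝ)+1)/2 := by
    intro j hj; positivity
  have hjb : ∀ j ∈ Finset.Icc 1 (d-1), (0:ℝ) < ((d:ℝ)-(j:ℝ))/2 := by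
    intro j hj
    rw [Finset.mem_Icc] at hj
    have : j < d := by omega
    have : (j:ℝ) < d := by exact_mod_cast this
    linarith
  have hbd : ∀ j ∈ Finset.Icc 1 (d-1),
      HasBetaDist P (X d j) (((j:ℝ)+1)/2) (((d:ℝ)-(j:ℝ))/2) := by
    intro j hj
    rw [Finset.mem_Icc] at hj
    exact hX d j hd hj.1 hj.2
  have hm : ∀ i : {j : ℕ // 1 ≤ j ∧ j ≤ d - 1}, Measurable (X d i.1) := by
    intro i
    exact (hX d i.1 hd i.2.1 i.2.2).1
  have hDmeas : Measurable (fun ω => ∏ j ∈ Finset.Icc 1 (d-1), X d j ω) := by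
    apply Finset.measurable_prod
    intro j hj
    rw [Finset.mem_Icc] at hj
    exact (hX d j hd hj.1 hj.2).1
  have hae : ∀ᵐ ω ∂P, ∀ j ∈ Finset.Icc 1 (d-1), X d j ω ∈ Set.Ioo (0:ℝ) 1 := by
    have := (ae_ball_iff ((Finset.Icc 1 (d-1)).finite_toSet.countable)).2
      (fun j (hj : j ∈ (↑(Finset.Icc 1 (d-1)) : Set ℕ)) => beta_range (hbd j hj))
    filter_upwards [this] with ω hω j hj
    exact hω j hj
  have hbound : ∀ᵐ ω ∂P, ‖∏ j ∈ Finset.Icc 1 (d-1), X d j ω‖ ≤ 1 := by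
    filter_upwards [hae] with ω hω
    rw [Real.norm_eq_abs, Finset.abs_prod]
    apply Finset.prod_le_one
    · intro j hj; exact abs_nonneg _
    · intro j hj
      rw [abs_le]
      constructor
      · linarith [(hω j hj).1]
      · linarith [(hω j hj).2]
  have hmem : MemLp (fun ω => ∏ j ∈ Finset.Icc 1 (d-1), X d j ω) 2 P :=
    MemLp.of_bound hDmeas.aestronglyMeasurable 1 hbound
  rw [variance_eq_sub hmem]
  have hexp1 : ∫ ω, (∏ j ∈ Finset.Icc 1 (d-1), X d j ω) ∂P
      = ∏ j ∈ Finset.Icc 1 (d-1), ((j:ℝ)+1)/((d:ℝ)+1) := by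
    have key := indep_integral_prod (hindep d hd) hm (sd d)
    have lhs : ∫ ω, (∏ j ∈ Finset.Icc 1 (d-1), X d j ω) ∂P
        = ∫ ω, ∏ i ∈ sd d, X d i.1 ω ∂P := by
      congr 1; funext ω
      exact (prod_sd d (fun j => X d j ω)).symm
    rw [lhs, key, prod_sd d (fun j => ∫ ω, X d j ω ∂P)]
    apply Finset.prod_congr rfl
    intro j hj
    have ha' := hja j hj
    have hb' := hjb j hj
    rw [beta_mean ha' hb' (hbd j hj)]
    rw [div_eq_div_iff (by linarith) (by positivity)]
    ring
  have hexp2 : ∫ ω, (∏ j ∈ Finset.Icc 1 (d-1), X d j ω)^2 ∂P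
      = ∏ j ∈ Finset.Icc 1 (d-1), ((j:ℝ)+1)*((j:ℝ)+3)/(((d:ℝ)+1)*((d:ℝ)+3)) := by
    have hind2 : iIndepFun
        (fun i : {j : ℕ // 1 ≤ j ∧ j ≤ d - 1} => (fun ω => X d i.1 ω ^ 2)) P := by
      exact (hindep d hd).comp (fun _ => fun x : ℝ => x ^ 2)
        (fun _ => measurable_id.pow_const 2)
    have hm2 : ∀ i : {j : ℕ // 1 ≤ j ∧ j ≤ d - 1},
        Measurable (fun ω => X d i.1 ω ^ 2) := fun i => (hm i).pow_const 2
    have key := indep_integral_prod hind2 hm2 (sd d)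
    have lhs : ∫ ω, (∏ j ∈ Finset.Icc 1 (d-1), X d j ω)^2 ∂P
        = ∫ ω, ∏ i ∈ sd d, X d i.1 ω ^ 2 ∂P := by
      congr 1; funext ω
      rw [← Finset.prod_pow]
      exact (prod_sd d (fun j => X d j ω ^ 2)).symm
    rw [lhs, key, prod_sd d (fun j => ∫ ω, X d j ω ^ 2 ∂P)]
    apply Finset.prod_congr rfl
    intro j hj
    have ha' := hja j hj
    have hb' := hjb j hj
    rw [beta_sq ha' hb' (hbd j hj)]
    have e1 : (0:ℝ) < ((j:ℝ)+1)/2 + ((d:ℝ)-(j:ℝ))/2 := by linarith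
    rw [div_eq_div_iff (by nlinarith) (by positivity)]
    ring
  rw [show ∫ x, ((fun ω => ∏ j ∈ Finset.Icc 1 (d-1), X d j ω) ^ 2) x ∂P
      = ∫ ω, (∏ j ∈ Finset.Icc 1 (d-1), X d j ω)^2 ∂P from rfl, hexp1, hexp2]


noncomputable def Aseq (d : ℕ) : ℝ :=
  (Nat.factorial d : ℝ) * (Nat.factorial (d+2) : ℝ) / (6 * (((d:ℝ)+1)*((d:ℝ)+3))^(d-1))

lemma Aseq_pos (d : ℕ) : 0 < Aseq d := by
  unfold Aseq
  have h1 : (0:ℝ) < (Nat.factorial d : ℝ) := by exact_mod_cast d.factorial_pos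
  have h2 : (0:ℝ) < (Nat.factorial (d+2) : ℝ) := by exact_mod_cast (d+2).factorial_pos
  have h3 : (0:ℝ) < ((d:ℝ)+1)*((d:ℝ)+3) := by positivity
  positivity

lemma prodA (n : ℕ) : ∏ j ∈ Finset.Icc 1 n, ((j:ℝ)+1) = (Nat.factorial (n+1) : ℝ) := by
  induction n with
  | zero => simp
  | succ n ih =>
    rw [Finset.prod_Icc_succ_top (by omega : 1 ≤ n+1), ih]
    rw [show n+1+1 = (n+1)+1 from rfl, Nat.factorial_succ (n+1)]
    push_cast
    ring

lemma prodB (n : ℕ) : ∏ j ∈ Finset.Icc 1 n, ((j:ℝ)+3) = (Nat.factorial (n+3) : ℝ) / 6 := by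
  induction n with
  | zero => norm_num [Nat.factorial]
  | succ n ih =>
    rw [Finset.prod_Icc_succ_top (by omega : 1 ≤ n+1), ih]
    rw [show n+1+3 = (n+3)+1 from rfl, Nat.factorial_succ (n+3)]
    push_cast
    ring

lemma A_formula {d : ℕ} (hd : 2 ≤ d) :
    ∏ j ∈ Finset.Icc 1 (d-1), ((j:ℝ)+1)*((j:ℝ)+3)/(((d:ℝ)+1)*((d:ℝ)+3)) = Aseq d := by
  have hn1 : d - 1 + 1 = d := by omega
  have hn3 : d - 1 + 3 = d + 2 := by omega
  rw [Finset.prod_div_distrib, Finset.prod_const, Finset.prod_mul_distrib]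
  have pa := prodA (d-1)
  have pb := prodB (d-1)
  rw [hn1] at pa
  rw [hn3] at pb
  rw [pa, pb, Nat.card_Icc]
  have : d - 1 + 1 - 1 = d - 1 := by omega
  rw [this]
  unfold Aseq
  have h3 : (0:ℝ) < ((d:ℝ)+1)*((d:ℝ)+3) := by positivity
  field_simp

lemma B_ineq {d : ℕ} (hd : 5 ≤ d) :
    (∏ j ∈ Finset.Icc 1 (d-1), ((j:ℝ)+1)/((d:ℝ)+1))^2
      ≤ 2/3 * ∏ j ∈ Finset.Icc 1 (d-1), ((j:ℝ)+1)*((j:ℝ)+3)/(((d:ℝ)+1)*((d:ℝ)+3)) := by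
  have hd5 : (5:ℝ) ≤ (d:ℝ) := by exact_mod_cast hd
  have hsplit : Finset.Icc 1 (d-1) = insert 1 (Finset.Icc 2 (d-1)) := by
    ext j
    simp only [Finset.mem_Icc, Finset.mem_insert]
    omega
  rw [← Finset.prod_pow, hsplit,
    Finset.prod_insert (by simp [Finset.mem_Icc]),
    Finset.prod_insert (by simp [Finset.mem_Icc])]
  have hvnn : ∀ j ∈ Finset.Icc 2 (d-1),
      (0:ℝ) ≤ ((j:ℝ)+1)*((j:ℝ)+3)/(((d:ℝ)+1)*((d:ℝ)+3)) := by
    intro j hj; positivity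
  have h2 : ∏ j ∈ Finset.Icc 2 (d-1), (((j:ℝ)+1)/((d:ℝ)+1))^2
      ≤ ∏ j ∈ Finset.Icc 2 (d-1), ((j:ℝ)+1)*((j:ℝ)+3)/(((d:ℝ)+1)*((d:ℝ)+3)) := by
    apply Finset.prod_le_prod
    · intro j hj; positivity
    · intro j hj
      rw [Finset.mem_Icc] at hj
      have hjd : (j:ℝ) ≤ (d:ℝ) - 1 := by
        have : (j:ℝ) ≤ ((d-1:ℕ):ℝ) := by exact_mod_cast hj.2
        rwa [Nat.cast_sub (by omega), Nat.cast_one] at this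
      rw [div_pow, div_le_div_iff₀ (by positivity) (by positivity)]
      have hj0 : (0:ℝ) ≤ (j:ℝ) := Nat.cast_nonneg j
      nlinarith [mul_nonneg (mul_nonneg (by linarith : (0:ℝ) ≤ (j:ℝ)+1)
        (by linarith : (0:ℝ) ≤ (d:ℝ)+1)) (by linarith : (0:ℝ) ≤ 2*(d:ℝ) - 2*(j:ℝ))]
  have h1 : ((((1:ℕ):ℝ)+1)/((d:ℝ)+1))^2
      ≤ 2/3 * ((((1:ℕ):ℝ)+1)*(((1:ℕ):ℝ)+3)/(((d:ℝ)+1)*((d:ℝ)+3))) := by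
    have hne1 : ((d:ℝ)+1) ≠ 0 := by linarith
    have hne3 : ((d:ℝ)+3) ≠ 0 := by linarith
    have e1 : ((((1:ℕ):ℝ)+1)/((d:ℝ)+1))^2 = 4/(((d:ℝ)+1)^2) := by
      push_cast; field_simp; ring
    have e2 : (2:ℝ)/3 * ((((1:ℕ):ℝ)+1)*(((1:ℕ):ℝ)+3)/(((d:ℝ)+1)*((d:ℝ)+3)))
        = 16/(3*(((d:ℝ)+1)*((d:ℝ)+3))) := by
      push_cast; field_simp; ring
    rw [e1, e2, div_le_div_iff₀ (by positivity) (by positivity)]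
    nlinarith
  calc ((((1:ℕ):ℝ)+1)/((d:ℝ)+1))^2 * ∏ j ∈ Finset.Icc 2 (d-1), (((j:ℝ)+1)/((d:ℝ)+1))^2
      ≤ ((((1:ℕ):ℝ)+1)/((d:ℝ)+1))^2 *
        ∏ j ∈ Finset.Icc 2 (d-1), ((j:ℝ)+1)*((j:ℝ)+3)/(((d:ℝ)+1)*((d:ℝ)+3)) := by
        apply mul_le_mul_of_nonneg_left h2 (by positivity)
    _ ≤ (2/3 * ((((1:ℕ):ℝ)+1)*(((1:ℕ):ℝ)+3)/(((d:ℝ)+1)*((d:ℝ)+3)))) *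
        ∏ j ∈ Finset.Icc 2 (d-1), ((j:ℝ)+1)*((j:ℝ)+3)/(((d:ℝ)+1)*((d:ℝ)+3)) := by
        apply mul_le_mul_of_nonneg_right h1 (Finset.prod_nonneg hvnn)
    _ = 2/3 * ((((1:ℕ):ℝ)+1)*(((1:ℕ):ℝ)+3)/(((d:ℝ)+1)*((d:ℝ)+3)) *
        ∏ j ∈ Finset.Icc 2 (d-1), ((j:ℝ)+1)*((j:ℝ)+3)/(((d:ℝ)+1)*((d:ℝ)+3))) := by ring


lemma tendsto_log_div_atTop' : Tendsto (fun x : ℝ => Real.log x / x) atTop (𝓝 0) :=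
  Real.isLittleO_log_id_atTop.tendsto_div_nhds_zero

lemma stirling_log : Tendsto (fun n : ℕ =>
    (Real.log (Nat.factorial n) - n * Real.log n + n) / n) atTop (𝓝 0) := by
  have hsp : Real.sqrt Real.pi ≠ 0 := by positivity
  have hlogst : Tendsto (fun n : ℕ => Real.log (Stirling.stirlingSeq n)) atTop
      (𝓝 (Real.log (Real.sqrt Real.pi))) :=
    (Stirling.tendsto_stirlingSeq_sqrt_pi.log hsp)
  have h1n : Tendsto (fun n : ℕ => (1:ℝ)/n) atTop (𝓝 0) := tendsto_one_div_atTop_nhds_zero_nat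
  have hterm1 : Tendsto (fun n : ℕ => Real.log (Stirling.stirlingSeq n) * ((1:ℝ)/n))
      atTop (𝓝 0) := by
    have := hlogst.mul h1n
    simpa using this
  have hterm2 : Tendsto (fun n : ℕ => Real.log (2*(n:ℝ)) / (2*(n:ℝ))) atTop (𝓝 0) := by
    apply tendsto_log_div_atTop'.comp
    apply Tendsto.const_mul_atTop (by norm_num : (0:ℝ) < 2)
    exact tendsto_natCast_atTop_atTop
  have hsum := hterm1.add hterm2
  rw [add_zero] at hsum
  apply hsum.congr'
  filter_upwards [eventually_ge_atTop 1] with n hn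
  have hn0 : (0:ℝ) < n := by exact_mod_cast hn
  have hfac : (0:ℝ) < (Nat.factorial n : ℝ) := by exact_mod_cast n.factorial_pos
  have hsq : (0:ℝ) < Real.sqrt (2*n) := Real.sqrt_pos.2 (by linarith)
  have hpow : (0:ℝ) < ((n:ℝ)/Real.exp 1)^n := by positivity
  have hst : Stirling.stirlingSeq n = (Nat.factorial n : ℝ) /
      (Real.sqrt (2*n) * ((n:ℝ)/Real.exp 1)^n) := rfl
  have hlog : Real.log (Stirling.stirlingSeq n)
      = Real.log (Nat.factorial n) - (Real.log (2*(n:ℝ))/2 + n * (Real.log n - 1)) := by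
    rw [hst, Real.log_div hfac.ne' (by positivity), Real.log_mul hsq.ne' hpow.ne',
      Real.log_sqrt (by linarith), Real.log_pow, Real.log_div hn0.ne'
        (Real.exp_pos 1).ne', Real.log_exp]
  rw [hlog]
  field_simp
  ring


lemma one_div_nat : Tendsto (fun n : ℕ => (1:ℝ)/n) atTop (𝓝 0) :=
  tendsto_one_div_atTop_nhds_zero_nat

lemma rat_lim (c : ℝ) : Tendsto (fun n : ℕ => ((n:ℝ)+c)/n) atTop (𝓝 1) := by
  have h := (tendsto_const_nhds (x := (1:ℝ)) (f := (atTop : Filter ℕ))).add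
    (one_div_nat.const_mul c)
  simp only [mul_zero, add_zero] at h
  apply h.congr'
  filter_upwards [eventually_ge_atTop 1] with n hn
  have hn0 : ((n:ℝ)) ≠ 0 := by positivity
  field_simp

lemma log_add_div (c : ℝ) (hc : 0 ≤ c) :
    Tendsto (fun n : ℕ => Real.log ((n:ℝ)+c) / n) atTop (𝓝 0) := by
  have h1 : Tendsto (fun n : ℕ => Real.log ((n:ℝ)+c)/((n:ℝ)+c)) atTop (𝓝 0) :=
    tendsto_log_div_atTop'.comp
      (tendsto_atTop_add_const_right atTop c tendsto_natCast_atTop_atTop)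
  have h3 := h1.mul (rat_lim c)
  simp only [zero_mul] at h3
  apply h3.congr'
  filter_upwards [eventually_ge_atTop 1] with n hn
  have hn0 : (0:ℝ) < (n:ℝ) := by exact_mod_cast hn
  have hnc : ((n:ℝ)+c) ≠ 0 := by positivity
  field_simp

lemma log_one_add_div (c : ℝ) (hc : 0 ≤ c) :
    Tendsto (fun n : ℕ => Real.log (1 + 1/((n:ℝ)+c))) atTop (𝓝 0) := by
  have hinv : Tendsto (fun n : ℕ => ((n:ℝ)+c)⁻¹) atTop (𝓝 0) :=
    tendsto_inv_atTop_zero.comp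
      (tendsto_atTop_add_const_right atTop c tendsto_natCast_atTop_atTop)
  have hinner : Tendsto (fun n : ℕ => 1 + 1/((n:ℝ)+c)) atTop (𝓝 1) := by
    have := (tendsto_const_nhds (x := (1:ℝ)) (f := (atTop : Filter ℕ))).add hinv
    simp only [add_zero] at this
    apply this.congr
    intro n
    rw [one_div]
  have := ((Real.continuousAt_log one_ne_zero).tendsto.comp hinner)
  rw [Real.log_one] at this
  exact this

lemma tendsto_log_Aseq :
    Tendsto (fun d : ℕ => ((d:ℝ))⁻¹ * Real.log (Aseq d)) atTop (𝓝 (-2)) := by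
  have hF : Tendsto (fun d : ℕ =>
      (Real.log (Nat.factorial d) - d * Real.log d + d) / d) atTop (𝓝 0) := stirling_log
  have hF2 : Tendsto (fun d : ℕ =>
      (Real.log (Nat.factorial (d+2)) - ((d:ℝ)+2) * Real.log ((d:ℝ)+2) + ((d:ℝ)+2))
        / ((d:ℝ)+2)) atTop (𝓝 0) := by
    have h := stirling_log.comp (tendsto_add_atTop_nat 2)
    apply h.congr
    intro d
    simp only [Function.comp_apply]
    push_cast
    ring_nf
  have hrat := rat_lim 2
  have hlog1 : Tendsto (fun d : ℕ => Real.log (1 + 1/(d:ℝ))) atTop (𝓝 0) := by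
    have := log_one_add_div 0 le_rfl
    simpa using this
  have hlog2 := log_one_add_div 2 (by norm_num)
  have h6 := log_add_div 1 (by norm_num)
  have h7 := log_add_div 2 (by norm_num)
  have h8 := log_add_div 3 (by norm_num)
  have b1 := hF.add (hrat.mul hF2)
  have b2 := (b1.sub hlog1).sub hlog2
  have b3 := (b2.add h6).add (h7.const_mul 2)
  have b4 := b3.add h8
  have b5 := (b4.sub_const 2).sub (one_div_nat.const_mul 2)
  have hbig := b5.sub (one_div_nat.const_mul (Real.log 6))
  have hval : ((((((((0:ℝ) + 1*0) - 0) - 0) + 0) + 2*0) + 0) - 2 - 2*0 - Real.log 6 * 0) = -2 := by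
    norm_num
  rw [hval] at hbig
  apply hbig.congr'
  filter_upwards [eventually_ge_atTop 1] with d hd
  have hd0 : (0:ℝ) < (d:ℝ) := by exact_mod_cast hd
  have hfd : (0:ℝ) < (Nat.factorial d : ℝ) := by exact_mod_cast d.factorial_pos
  have hfd2 : (0:ℝ) < (Nat.factorial (d+2) : ℝ) := by exact_mod_cast (d+2).factorial_pos
  have hp1 : (0:ℝ) < (d:ℝ)+1 := by linarith
  have hp2 : (0:ℝ) < (d:ℝ)+2 := by linarith
  have hp3 : (0:ℝ) < (d:ℝ)+3 := by linarith
  have hA : Real.log (Aseq d) = Real.log (Nat.factorial d : ℝ)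
      + Real.log (Nat.factorial (d+2) : ℝ)
      - (Real.log 6 + ((d:ℝ)-1)*(Real.log ((d:ℝ)+1) + Real.log ((d:ℝ)+3))) := by
    unfold Aseq
    rw [Real.log_div (by positivity) (by positivity),
      Real.log_mul hfd.ne' hfd2.ne',
      Real.log_mul (by norm_num : (6:ℝ) ≠ 0) (by positivity),
      Real.log_pow, Real.log_mul hp1.ne' hp3.ne']
    have hc : ((d - 1 : ℕ) : ℝ) = (d:ℝ) - 1 := by
      rw [Nat.cast_sub (by omega), Nat.cast_one]
    rw [hc]
  have e1 : Real.log (1 + 1/(d:ℝ)) = Real.log ((d:ℝ)+1) - Real.log d := by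
    rw [show (1:ℝ) + 1/(d:ℝ) = ((d:ℝ)+1)/d by field_simp,
      Real.log_div hp1.ne' hd0.ne']
  have e2 : Real.log (1 + 1/((d:ℝ)+2)) = Real.log ((d:ℝ)+3) - Real.log ((d:ℝ)+2) := by
    rw [show (1:ℝ) + 1/((d:ℝ)+2) = ((d:ℝ)+3)/((d:ℝ)+2) by field_simp; ring,
      Real.log_div hp3.ne' hp2.ne']
  rw [hA, e1, e2]
  field_simp
  ring


theorem stmt8
    {Ω : Type*} [MeasurableSpace Ω] (P : Measure Ω) [IsProbabilityMeasure P]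
    (X : ℕ → ℕ → Ω → ℝ)
    (hindep : ∀ d : ℕ, 2 ≤ d →
      iIndepFun
        (fun j : {j : ℕ // 1 ≤ j ∧ j ≤ d - 1} => X d j) P)
    (hX : ∀ d j : ℕ, 2 ≤ d → 1 ≤ j → j ≤ d - 1 →
      HasBetaDist P (X d j) (((j : ℝ) + 1) / 2) (((d : ℝ) - (j : ℝ)) / 2)) :
    Tendsto (fun d : ℕ => (variance (fun ω => (∏ j ∈ Finset.Icc 1 (d - 1), X d j ω)) P) ^ ((d : ℝ)⁻¹))
      atTop (nhds (Real.exp (-2))) := by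
  set V : ℕ → ℝ := fun d => variance (fun ω => (∏ j ∈ Finset.Icc 1 (d - 1), X d j ω)) P with hV
  have hVbounds : ∀ d : ℕ, 5 ≤ d → Aseq d / 3 ≤ V d ∧ V d ≤ Aseq d := by
    intro d hd5
    have hd2 : 2 ≤ d := by omega
    have hvf := var_formula P X hindep hX hd2
    have hAf := A_formula hd2
    have hBi := B_ineq hd5
    rw [hAf] at hvf hBi
    have hBnn : (0:ℝ) ≤ (∏ j ∈ Finset.Icc 1 (d-1), ((j:ℝ)+1)/((d:ℝ)+1))^2 := sq_nonneg _
    constructor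
    · rw [hV]; simp only; rw [hvf]; linarith
    · rw [hV]; simp only; rw [hvf]; linarith
  have hVpos : ∀ d : ℕ, 5 ≤ d → 0 < V d := by
    intro d hd5
    have := (hVbounds d hd5).1
    have hA := Aseq_pos d
    linarith
  -- squeeze the logs
  have h3 : Tendsto (fun d : ℕ => ((1:ℝ)/d) * Real.log 3) atTop (𝓝 0) := by
    have := one_div_nat.mul_const (Real.log 3)
    simpa using this
  have hlower : Tendsto (fun d : ℕ => (d:ℝ)⁻¹ * (Real.log (Aseq d) - Real.log 3))
      atTop (𝓝 (-2)) := by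
    have h := tendsto_log_Aseq.sub h3
    rw [sub_zero] at h
    apply h.congr
    intro d
    rw [one_div]
    ring
  have hVlog : Tendsto (fun d : ℕ => (d:ℝ)⁻¹ * Real.log (V d)) atTop (𝓝 (-2)) := by
    apply tendsto_of_tendsto_of_tendsto_of_le_of_le' hlower tendsto_log_Aseq
    · filter_upwards [eventually_ge_atTop 5] with d hd5
      have hb := (hVbounds d hd5).1
      have hA := Aseq_pos d
      have hVp := hVpos d hd5
      have hlog : Real.log (Aseq d) - Real.log 3 ≤ Real.log (V d) := by
        rw [← Real.log_div hA.ne' (by norm_num : (3:ℝ) ≠ 0)]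
        exact Real.log_le_log (by positivity) hb
      have hdnn : (0:ℝ) ≤ (d:ℝ)⁻¹ := by positivity
      exact mul_le_mul_of_nonneg_left hlog hdnn
    · filter_upwards [eventually_ge_atTop 5] with d hd5
      have hb := (hVbounds d hd5).2
      have hVp := hVpos d hd5
      have hlog : Real.log (V d) ≤ Real.log (Aseq d) := Real.log_le_log hVp hb
      have hdnn : (0:ℝ) ≤ (d:ℝ)⁻¹ := by positivity
      exact mul_le_mul_of_nonneg_left hlog hdnn
  have hexp : Tendsto (fun d : ℕ => Real.exp ((d:ℝ)⁻¹ * Real.log (V d))) atTop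
      (𝓝 (Real.exp (-2))) := (Real.continuous_exp.continuousAt.tendsto.comp hVlog)
  apply hexp.congr'
  filter_upwards [eventually_ge_atTop 5] with d hd5
  rw [Real.rpow_def_of_pos (hVpos d hd5), mul_comm]
end
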